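/- arXiv:2510.19494 — 5 statements merged into one kernel-verified Lean document; each statement's English description precedes it below -/
import Mathlib

section
/- Let Z ∈ ℕ and let c : ℤ → ℂ satisfy c_k = 0 for |k| > Z and c_{-k} = conj(c_k) for all k. Then there exist a dimension d ∈ ℕ, a Hermitian matrix H ∈ M_d(ℂ), a unit vector Γ ∈ ℂ^d, and a Hermitian matrix M ∈ M_d(ℂ) such that for all x ∈ ℝ, ⟨Γ, e^{ixH} M e^{-ixH} Γ⟩ = Σ_{k=-Z}^{Z} c_k e^{ikx}. That is, a single-layer quantum model can realize any finite set of Fourier coefficients of a real-valued trigonometric polynomial. -/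
open Matrix

/-- The univariate quantum model `x ↦ ⟨Γ, e^{ixH} M e^{-ixH} Γ⟩`. -/
noncomputable def quantumModel {d : ℕ} (H M : Matrix (Fin d) (Fin d) ℂ)
    (Γ : Fin d → ℂ) (x : ℝ) : ℂ :=
  star Γ ⬝ᵥ ((NormedSpace.exp ((Complex.I * x) • H) * M *
      NormedSpace.exp ((-(Complex.I * x)) • H)).mulVec Γ)

/-- A single-layer quantum model can realize any finite set of Fourier coefficients
of a real-valued trigonometric polynomial. -/
theorem exists_quantumModel_realizing_fourier_coeffs (Z : ℕ) (c : ℤ → ℂ)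
    (hsupp : ∀ k : ℤ, (Z : ℤ) < |k| → c k = 0)
    (hconj : ∀ k : ℤ, c (-k) = (starRingEnd ℂ) (c k)) :
    ∃ (d : ℕ) (H M : Matrix (Fin d) (Fin d) ℂ) (Γ : Fin d → ℂ),
      H.IsHermitian ∧ M.IsHermitian ∧ star Γ ⬝ᵥ Γ = 1 ∧
      ∀ x : ℝ, quantumModel H M Γ x =
        ∑ k ∈ Finset.Icc (-(Z : ℤ)) (Z : ℤ), c k * Complex.exp (Complex.I * k * x) := by
  classical
  set v : Fin (Z+1) → ℂ := fun j => ((j : ℕ) : ℂ) with hv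
  set H : Matrix (Fin (Z+1)) (Fin (Z+1)) ℂ := Matrix.diagonal v with hH
  set M : Matrix (Fin (Z+1)) (Fin (Z+1)) ℂ := Matrix.of (fun j l : Fin (Z+1) =>
    if l = 0 then ((Z:ℂ)+1) * c (j : ℤ) else if j = 0 then ((Z:ℂ)+1) * c (-(l : ℤ)) else 0) with hM
  set γ : ℂ := (((Real.sqrt (Z+1))⁻¹ : ℝ) : ℂ) with hγ
  have hc0 : (starRingEnd ℂ) (c 0) = c 0 := by simpa using (hconj 0).symm
  have hZne : ((Z:ℂ)+1) ≠ 0 := Nat.cast_add_one_ne_zero Z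
  have hHh : H.IsHermitian := by
    rw [Matrix.IsHermitian, hH, Matrix.diagonal_conjTranspose]
    have hsv : star v = v := by funext j; simp [hv]
    rw [hsv]
  have hMh : M.IsHermitian := by
    rw [Matrix.IsHermitian]
    ext j l
    simp only [Matrix.conjTranspose_apply, hM, Matrix.of_apply]
    by_cases hl : l = 0 <;> by_cases hj : j = 0 <;>
      simp [hl, hj, _root_.map_mul, hc0, ← hconj]
  have hγγ : (starRingEnd ℂ) γ * γ = ((Z:ℂ)+1)⁻¹ := by
    rw [hγ, Complex.conj_ofReal, ← Complex.ofReal_mul,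
      ← Real.sqrt_inv, Real.mul_self_sqrt (by positivity)]
    push_cast
    ring_nf
  set Γ : Fin (Z+1) → ℂ := fun _ => γ with hΓ
  have hnorm : star Γ ⬝ᵥ Γ = 1 := by
    simp only [dotProduct, Pi.star_apply, hΓ, RCLike.star_def, Finset.sum_const,
      Finset.card_univ, Fintype.card_fin, nsmul_eq_mul, hγγ]
    push_cast
    field_simp
  have hexp : ∀ z : ℂ, NormedSpace.exp (z • H) =
      Matrix.diagonal (fun j => Complex.exp (z * v j)) := by
    intro z
    rw [hH, ← Matrix.diagonal_smul, Matrix.exp_diagonal, Pi.exp_def]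
    refine congrArg Matrix.diagonal (funext fun j => ?_)
    rw [Pi.smul_apply, smul_eq_mul, Complex.exp_eq_exp_ℂ]
  have hqm : ∀ x : ℝ, quantumModel H M Γ x =
      ∑ j : Fin (Z+1), ∑ l : Fin (Z+1),
        (starRingEnd ℂ) γ * (Complex.exp (Complex.I * x * v j) * M j l *
          Complex.exp (-(Complex.I * x) * v l) * γ) := by
    intro x
    have hPM : ∀ (a b : Fin (Z+1) → ℂ),
        Matrix.diagonal a * M * Matrix.diagonal b
          = Matrix.of (fun j l => a j * M j l * b l) := by
      intro a b
      ext j l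
      simp [Matrix.mul_diagonal, Matrix.diagonal_mul, mul_assoc]
    rw [quantumModel, hexp, hexp, hPM]
    simp only [dotProduct, mulVec, Matrix.of_apply, Pi.star_apply, hΓ,
      RCLike.star_def, Finset.mul_sum]
  refine ⟨Z+1, H, M, Γ, hHh, hMh, hnorm, fun x => ?_⟩
  rw [hqm]
  set F : Fin (Z+1) → Fin (Z+1) → ℂ := fun j l =>
    (starRingEnd ℂ) γ * (Complex.exp (Complex.I * x * v j) * M j l *
      Complex.exp (-(Complex.I * x) * v l) * γ) with hF
  set g : ℤ → ℂ := fun k => c k * Complex.exp (Complex.I * k * x) with hg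
  have hv0 : v 0 = 0 := by simp [hv]
  have hFj0 : ∀ j : Fin (Z+1), F j 0 = g (j : ℤ) := by
    intro j
    have hMj0 : M j 0 = ((Z:ℂ)+1) * c (j : ℤ) := by simp [hM]
    have harg : Complex.I * x * v j = Complex.I * ((j : ℤ) : ℂ) * x := by
      push_cast [hv]; ring
    simp only [hF, hg]
    rw [hMj0, hv0, harg]
    simp only [mul_zero, Complex.exp_zero, mul_one]
    calc (starRingEnd ℂ) γ * (Complex.exp (Complex.I * ((j : ℤ) : ℂ) * x) *
          (((Z:ℂ)+1) * c (j : ℤ)) * γ)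
        = ((starRingEnd ℂ) γ * γ) * (((Z:ℂ)+1) *
            (c (j : ℤ) * Complex.exp (Complex.I * ((j : ℤ) : ℂ) * x))) := by ring
      _ = c (j : ℤ) * Complex.exp (Complex.I * ((j : ℤ) : ℂ) * x) := by
          rw [hγγ, inv_mul_cancel_left₀ hZne]
  have hF0l : ∀ l : Fin (Z+1), l ≠ 0 → F 0 l = g (-(l : ℤ)) := by
    intro l hl
    have hM0l : M 0 l = ((Z:ℂ)+1) * c (-(l : ℤ)) := by simp [hM, hl]
    have harg : -(Complex.I * x) * v l = Complex.I * ((-(l : ℤ) : ℤ) : ℂ) * x := by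
      push_cast [hv]; ring
    simp only [hF, hg]
    rw [hM0l, hv0, harg]
    simp only [mul_zero, Complex.exp_zero, one_mul]
    calc (starRingEnd ℂ) γ * (((Z:ℂ)+1) * c (-(l : ℤ)) *
          Complex.exp (Complex.I * ((-(l : ℤ) : ℤ) : ℂ) * x) * γ)
        = ((starRingEnd ℂ) γ * γ) * (((Z:ℂ)+1) *
            (c (-(l : ℤ)) * Complex.exp (Complex.I * ((-(l : ℤ) : ℤ) : ℂ) * x))) := by ring
      _ = c (-(l : ℤ)) * Complex.exp (Complex.I * ((-(l : ℤ) : ℤ) : ℂ) * x) := by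
          rw [hγγ, inv_mul_cancel_left₀ hZne]
  have hFzero : ∀ j l : Fin (Z+1), j ≠ 0 → l ≠ 0 → F j l = 0 := by
    intro j l hj hl
    have : M j l = 0 := by simp [hM, hj, hl]
    simp [hF, this]
  have key : (∑ j : Fin (Z+1), ∑ l : Fin (Z+1), F j l)
      = (∑ j : Fin (Z+1), g (j : ℤ)) +
        ∑ l ∈ Finset.univ.erase (0 : Fin (Z+1)), g (-(l : ℤ)) := by
    calc (∑ j : Fin (Z+1), ∑ l : Fin (Z+1), F j l)
        = ∑ j : Fin (Z+1), (F j 0 + ∑ l ∈ Finset.univ.erase 0, F j l) := by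
          refine Finset.sum_congr rfl fun j _ => ?_
          rw [Finset.add_sum_erase _ _ (Finset.mem_univ 0)]
      _ = (∑ j : Fin (Z+1), F j 0) +
            ∑ j : Fin (Z+1), ∑ l ∈ Finset.univ.erase 0, F j l := Finset.sum_add_distrib
      _ = (∑ j : Fin (Z+1), g (j : ℤ)) +
            ∑ l ∈ Finset.univ.erase (0 : Fin (Z+1)), g (-(l : ℤ)) := by
          congr 1
          · exact Finset.sum_congr rfl fun j _ => hFj0 j
          · rw [Fintype.sum_eq_single (0 : Fin (Z+1))]
            · exact Finset.sum_congr rfl fun l hl =>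
                hF0l l (Finset.ne_of_mem_erase hl)
            · intro j hj
              exact Finset.sum_eq_zero fun l hl =>
                hFzero j l hj (Finset.ne_of_mem_erase hl)
  rw [key]
  -- now reindex to Icc (-Z) Z
  have hsplit : Finset.Icc (-(Z:ℤ)) (Z:ℤ)
      = Finset.Icc (-(Z:ℤ)) (-1) ∪ Finset.Icc (0:ℤ) (Z:ℤ) := by
    ext k
    simp only [Finset.mem_Icc, Finset.mem_union]
    omega
  have hdisj : Disjoint (Finset.Icc (-(Z:ℤ)) (-1)) (Finset.Icc (0:ℤ) (Z:ℤ)) := by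
    rw [Finset.disjoint_left]
    intro k hk hk'
    simp only [Finset.mem_Icc] at hk hk'
    omega
  have hA : (∑ j : Fin (Z+1), g (j : ℤ)) = ∑ k ∈ Finset.Icc (0:ℤ) (Z:ℤ), g k := by
    refine Finset.sum_bij' (fun (j : Fin (Z+1)) _ => ((j : ℕ) : ℤ))
      (fun k hk => (⟨k.toNat, ?_⟩ : Fin (Z+1))) ?_ ?_ ?_ ?_ ?_
    · simp only [Finset.mem_Icc] at hk; omega
    · intro j _
      have := j.isLt
      simp only [Finset.mem_Icc]
      omega
    · intro k hk
      exact Finset.mem_univ _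
    · intro j _
      have := j.isLt
      exact Fin.ext (by simp)
    · intro k hk
      simp only [Finset.mem_Icc] at hk
      simp only []
      omega
    · intro j _
      rfl
  have hB : (∑ l ∈ Finset.univ.erase (0 : Fin (Z+1)), g (-(l : ℤ)))
      = ∑ k ∈ Finset.Icc (-(Z:ℤ)) (-1), g k := by
    refine Finset.sum_bij' (fun (l : Fin (Z+1)) _ => -((l : ℕ) : ℤ))
      (fun k hk => (⟨(-k).toNat, ?_⟩ : Fin (Z+1))) ?_ ?_ ?_ ?_ ?_
    · simp only [Finset.mem_Icc] at hk; omega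
    · intro l hl
      have := l.isLt
      have hne : (l : ℕ) ≠ 0 := by
        intro h
        exact (Finset.ne_of_mem_erase hl) (Fin.ext (by simp [h]))
      simp only [Finset.mem_Icc]
      omega
    · intro k hk
      simp only [Finset.mem_Icc] at hk
      refine Finset.mem_erase.mpr ⟨?_, Finset.mem_univ _⟩
      intro h
      have := congrArg Fin.val h
      simp only [Fin.val_zero] at this
      omega
    · intro l _
      have := l.isLt
      exact Fin.ext (by simp)
    · intro k hk
      simp only [Finset.mem_Icc] at hk
      simp only []
      omega
    · intro l _
      rfl
  rw [hA, hB, hsplit, Finset.sum_union hdisj, add_comm]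
end

section
/- (Convergence in C⁰, univariate realizable form.) Let f* : ℝ → ℝ be continuous, let U be a compact subset of the open interval (0, 2π), and let ε > 0. Then there exist a dimension d ∈ ℕ, a Hermitian matrix H ∈ M_d(ℂ), a unit vector Γ ∈ ℂ^d, and a Hermitian matrix M ∈ M_d(ℂ) such that sup_{x ∈ U} |⟨Γ, e^{ixH} M e^{-ixH} Γ⟩ − f*(x)| < ε. -/
open Matrix

private lemma qm_sum_split (n : ℕ) (c : ℤ → ℂ) (E : Fin (n+1) → Fin (n+1) → ℂ) :
    (∑ j : Fin (n+1), ∑ k : Fin (n+1),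
      (if k = 0 then c ((j:ℕ):ℤ) else if j = 0 then c (-((k:ℕ):ℤ)) else 0) * E j k)
    = ∑ j : Fin (n+1), c ((j:ℕ):ℤ) * E j 0
      + ∑ k : Fin (n+1), (if k = 0 then 0 else c (-((k:ℕ):ℤ)) * E 0 k) := by
  have key : ∀ j k : Fin (n+1),
      (if k = 0 then c ((j:ℕ):ℤ) else if j = 0 then c (-((k:ℕ):ℤ)) else 0) * E j k
      = (if k = 0 then c ((j:ℕ):ℤ) * E j k else 0)
        + (if j = 0 then (if k = 0 then 0 else c (-((k:ℕ):ℤ)) * E j k) else 0) := by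
    intro j k
    by_cases hk : k = 0 <;> by_cases hj : j = 0 <;> simp [hk, hj]
  simp only [key, Finset.sum_add_distrib]
  congr 1
  · refine Finset.sum_congr rfl fun j _ => ?_
    simp [Finset.sum_ite_eq']
  · rw [Finset.sum_comm]
    refine Finset.sum_congr rfl fun k _ => ?_
    by_cases hk : k = 0
    · simp [hk]
    · simp only [hk, if_neg hk]
      rw [Finset.sum_ite_eq' Finset.univ (0 : Fin (n+1))]
      simp

private lemma qm_sum_Icc_split (n : ℕ) (f : ℤ → ℂ) :
    ∑ m ∈ Finset.Icc (-(n:ℤ)) (n:ℤ), f m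
    = ∑ j : Fin (n+1), f ((j:ℕ):ℤ)
      + ∑ k : Fin (n+1), (if k = 0 then 0 else f (-((k:ℕ):ℤ))) := by
  induction n with
  | zero => simp
  | succ n ih =>
    have h1 : Finset.Icc (-((n+1:ℕ):ℤ)) ((n+1:ℕ):ℤ)
        = insert (-((n+1:ℕ):ℤ)) (insert ((n+1:ℕ):ℤ) (Finset.Icc (-(n:ℤ)) (n:ℤ))) := by
      ext m
      simp only [Finset.mem_Icc, Finset.mem_insert]
      push_cast
      omega
    rw [h1, Finset.sum_insert, Finset.sum_insert, ih,
      Fin.sum_univ_castSucc (n := n+1), Fin.sum_univ_castSucc (n := n+1)]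
    · simp only [Fin.coe_castSucc, Fin.val_last]
      have : (Fin.last (n+1)) ≠ 0 := by
        simp [Fin.ext_iff]
      rw [if_neg this]
      have hcast : ∀ j : Fin (n+1), ((Fin.castSucc j : Fin (n+2)) = 0) ↔ (j = 0) := by
        intro j; exact Fin.castSucc_eq_zero_iff
      simp only [hcast]
      push_cast
      ring_nf
    · simp only [Finset.mem_insert, Finset.mem_Icc, not_or]
      push_cast; omega
    · simp only [Finset.mem_insert, Finset.mem_Icc, not_or]
      push_cast; omega

private lemma qm_sum_Icc_neg (n : ℕ) (g : ℤ → ℂ) :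
    ∑ m ∈ Finset.Icc (-(n:ℤ)) (n:ℤ), g (-m) = ∑ m ∈ Finset.Icc (-(n:ℤ)) (n:ℤ), g m := by
  refine Finset.sum_nbij' (fun m => -m) (fun m => -m) ?_ ?_ ?_ ?_ ?_ <;>
    intros <;> simp_all [Finset.mem_Icc] <;> omega

private lemma qm_eval (n : ℕ) (c : ℤ → ℂ) (x : ℝ) :
    quantumModel (Matrix.diagonal (fun j : Fin (n+1) => ((j : ℕ) : ℂ)))
      (Matrix.of fun j k : Fin (n+1) => ((n:ℂ)+1) *
        (if k = 0 then c ((j:ℕ):ℤ) else if j = 0 then c (-((k:ℕ):ℤ)) else 0))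
      (fun _ => (((Real.sqrt (n+1) : ℝ) : ℂ))⁻¹) x
    = ∑ m ∈ Finset.Icc (-(n:ℤ)) (n:ℤ), c m * Complex.exp (Complex.I * m * x) := by
  have hr : ((Real.sqrt (n+1))⁻¹ : ℝ) * (Real.sqrt (n+1))⁻¹ * ((n:ℝ)+1) = 1 := by
    rw [← mul_inv, Real.mul_self_sqrt (by positivity)]
    field_simp
  have hs : (((Real.sqrt (n+1) : ℝ) : ℂ))⁻¹ * (((Real.sqrt (n+1) : ℝ) : ℂ))⁻¹ * ((n:ℂ)+1) = 1 := by
    exact_mod_cast hr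
  have step1 : quantumModel (Matrix.diagonal (fun j : Fin (n+1) => ((j : ℕ) : ℂ)))
      (Matrix.of fun j k : Fin (n+1) => ((n:ℂ)+1) *
        (if k = 0 then c ((j:ℕ):ℤ) else if j = 0 then c (-((k:ℕ):ℤ)) else 0))
      (fun _ => (((Real.sqrt (n+1) : ℝ) : ℂ))⁻¹) x
      = ∑ j : Fin (n+1), ∑ k : Fin (n+1),
        (if k = 0 then c ((j:ℕ):ℤ) else if j = 0 then c (-((k:ℕ):ℤ)) else 0) *
          (Complex.exp (Complex.I * x * ((j:ℕ):ℂ)) *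
           Complex.exp (-(Complex.I * x) * ((k:ℕ):ℂ))) := by
    unfold quantumModel
    rw [show ((Complex.I * x) • Matrix.diagonal (fun j : Fin (n+1) => ((j : ℕ) : ℂ)))
        = Matrix.diagonal (fun j : Fin (n+1) => Complex.I * x * ((j : ℕ) : ℂ)) by
      rw [← Matrix.diagonal_smul]; rfl]
    rw [show ((-(Complex.I * x)) • Matrix.diagonal (fun j : Fin (n+1) => ((j : ℕ) : ℂ)))
        = Matrix.diagonal (fun j : Fin (n+1) => -(Complex.I * x) * ((j : ℕ) : ℂ)) by
      rw [← Matrix.diagonal_smul]; rfl]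
    rw [Matrix.exp_diagonal, Matrix.exp_diagonal]
    simp only [dotProduct, Matrix.mulVec, Matrix.diagonal_mul, Matrix.mul_diagonal,
      Pi.star_apply, Matrix.of_apply, Pi.exp_def, ← Complex.exp_eq_exp_ℂ]
    rw [Finset.sum_congr rfl]
    intro j _
    rw [Finset.mul_sum, Finset.sum_congr rfl]
    intro k _
    rw [star_inv₀, Complex.star_def, Complex.conj_ofReal]
    linear_combination (Complex.exp (Complex.I * ↑x * ((j:ℕ):ℂ)) *
      Complex.exp (-(Complex.I * ↑x) * ((k:ℕ):ℂ)) *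
      (if k = 0 then c ((j:ℕ):ℤ) else if j = 0 then c (-((k:ℕ):ℤ)) else 0)) * hs
  rw [step1, qm_sum_split, qm_sum_Icc_split n (fun m => c m * Complex.exp (Complex.I * m * x))]
  congr 1
  · refine Finset.sum_congr rfl fun j _ => ?_
    have h0 : (((0 : Fin (n+1)):ℕ):ℂ) = 0 := by simp
    rw [h0, mul_zero, Complex.exp_zero, mul_one]
    congr 2
    push_cast
    ring
  · refine Finset.sum_congr rfl fun k _ => ?_
    by_cases hk : k = 0
    · simp [hk]
    · simp only [hk, if_neg hk]
      have h0 : (((0 : Fin (n+1)):ℕ):ℂ) = 0 := by simp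
      rw [h0, mul_zero, Complex.exp_zero, one_mul]
      congr 2
      push_cast
      ring_nf

private lemma qm_approx_trig (fstar : ℝ → ℝ) (hfstar : Continuous fstar)
    (U : Set ℝ) (hUcomp : IsCompact U) (hU : U ⊆ Set.Ioo 0 (2 * Real.pi))
    (ε : ℝ) (hε : 0 < ε) :
    ∃ c : ℤ →₀ ℂ, ∀ x ∈ U,
      ‖(∑ m ∈ c.support, c m * Complex.exp (Complex.I * m * x)) - fstar x‖ < ε := by
  have h2π : (0:ℝ) < 2 * Real.pi := by positivity
  haveI : Fact ((0:ℝ) < 2 * Real.pi) := ⟨h2π⟩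
  obtain ⟨φ, hφ0, hφ1, hφ01⟩ :=
    exists_continuous_zero_one_of_isClosed
      (isClosed_compl_iff.mpr isOpen_Ioo) hUcomp.isClosed
      (Set.disjoint_left.mpr fun x hx hxU => hx (hU hxU))
  set h : ℝ → ℂ := fun y => ((φ y * fstar y : ℝ) : ℂ) with hh
  have hφzero : ∀ y : ℝ, y ∉ Set.Ioo 0 (2*Real.pi) → h y = 0 := by
    intro y hy
    have : φ y = 0 := hφ0 hy
    simp [hh, this]
  have hcont : Continuous h := by
    apply Complex.continuous_ofReal.comp
    exact (map_continuous φ).mul hfstar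
  have h0 : h 0 = h (2*Real.pi) := by
    rw [hφzero 0 (by simp), hφzero _ (by simp [h2π.ne'])]
  set g : C(AddCircle (2*Real.pi), ℂ) :=
    ⟨AddCircle.liftIco (2*Real.pi) 0 h,
      AddCircle.liftIco_zero_continuous h0 hcont.continuousOn⟩ with hg
  have hmem : g ∈ closure ((Submodule.span ℂ (Set.range (@fourier (2*Real.pi)))) : Set _) := by
    have := span_fourier_closure_eq_top (T := 2*Real.pi)
    rw [← Submodule.topologicalClosure_coe, this]
    trivial
  obtain ⟨P, hPmem, hPdist⟩ := Metric.mem_closure_iff.mp hmem ε hε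
  obtain ⟨c, hc⟩ := Finsupp.mem_span_range_iff_exists_finsupp.mp hPmem
  refine ⟨c, fun x hx => ?_⟩
  have hxIco : x ∈ Set.Ico (0:ℝ) (2*Real.pi) := ⟨(hU hx).1.le, (hU hx).2⟩
  have hgx : g (x : AddCircle (2*Real.pi)) = (fstar x : ℂ) := by
    have : AddCircle.liftIco (2*Real.pi) 0 h (x : AddCircle (2*Real.pi)) = h x :=
      AddCircle.liftIco_zero_coe_apply hxIco
    rw [hg]
    simp only [ContinuousMap.coe_mk]
    rw [this, hh]
    simp [hφ1 hx]
  have hPx : P (x : AddCircle (2*Real.pi))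
      = ∑ m ∈ c.support, c m * Complex.exp (Complex.I * m * x) := by
    rw [← hc]
    rw [Finsupp.sum]
    rw [ContinuousMap.coe_sum, Finset.sum_apply]
    refine Finset.sum_congr rfl fun m _ => ?_
    have : (fourier m) ((x : ℝ) : AddCircle (2*Real.pi))
        = Complex.exp (Complex.I * m * x) := by
      rw [fourier_coe_apply]
      congr 1
      have hπ : (Real.pi : ℂ) ≠ 0 := by
        exact_mod_cast Real.pi_ne_zero
      field_simp
      push_cast
      ring
    simp [this]
  calc ‖(∑ m ∈ c.support, c m * Complex.exp (Complex.I * m * x)) - fstar x‖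
      = dist (g (x : AddCircle (2*Real.pi))) (P (x : AddCircle (2*Real.pi))) := by
        rw [hgx, hPx, Complex.dist_eq]
        rw [← norm_neg]
        congr 1; ring
    _ ≤ dist g P := ContinuousMap.dist_apply_le_dist _
    _ < ε := hPdist

/-- Convergence in `C⁰`: quantum models uniformly approximate continuous functions on
compact subsets of `(0, 2π)`. -/
theorem quantumModel_dense_C0 (fstar : ℝ → ℝ) (hfstar : Continuous fstar)
    (U : Set ℝ) (hUcomp : IsCompact U) (hU : U ⊆ Set.Ioo 0 (2 * Real.pi))
    (ε : ℝ) (hε : 0 < ε) :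
    ∃ (d : ℕ) (H M : Matrix (Fin d) (Fin d) ℂ) (Γ : Fin d → ℂ),
      H.IsHermitian ∧ M.IsHermitian ∧ star Γ ⬝ᵥ Γ = 1 ∧
      ∀ x ∈ U, ‖quantumModel H M Γ x - (fstar x : ℂ)‖ < ε := by
  obtain ⟨c, hc⟩ := qm_approx_trig fstar hfstar U hUcomp hU ε hε
  set n : ℕ := c.support.sup Int.natAbs with hn
  set cc : ℤ → ℂ := fun m => (c m + (starRingEnd ℂ) (c (-m))) / 2 with hcc
  have hsym : ∀ m : ℤ, cc (-m) = (starRingEnd ℂ) (cc m) := by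
    intro m
    simp only [hcc, map_div₀, map_add, RingHomCompTriple.comp_apply, neg_neg,
      Complex.conj_conj, map_ofNat, RingHom.id_apply]
    ring
  have hr : ((Real.sqrt (n+1))⁻¹ : ℝ) * (Real.sqrt (n+1))⁻¹ * ((n:ℝ)+1) = 1 := by
    rw [← mul_inv, Real.mul_self_sqrt (by positivity)]
    field_simp
  have hs : (((Real.sqrt (n+1) : ℝ) : ℂ))⁻¹ * (((Real.sqrt (n+1) : ℝ) : ℂ))⁻¹ * ((n:ℂ)+1) = 1 := by
    exact_mod_cast hr
  refine ⟨n+1,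
    Matrix.diagonal (fun j : Fin (n+1) => ((j:ℕ):ℂ)),
    Matrix.of (fun j k : Fin (n+1) => ((n:ℂ)+1) *
      (if k = 0 then cc ((j:ℕ):ℤ) else if j = 0 then cc (-((k:ℕ):ℤ)) else 0)),
    (fun _ => (((Real.sqrt (n+1) : ℝ) : ℂ))⁻¹), ?_, ?_, ?_, ?_⟩
  · have hstar : (star fun j : Fin (n+1) => ((j:ℕ):ℂ)) = fun j : Fin (n+1) => ((j:ℕ):ℂ) := by
      funext j
      simp [Pi.star_apply, Complex.star_def]
    rw [Matrix.IsHermitian, Matrix.diagonal_conjTranspose, hstar]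
  · rw [Matrix.IsHermitian]
    ext j k
    simp only [Matrix.conjTranspose_apply, Matrix.of_apply, star_mul', Complex.star_def]
    by_cases hk : k = 0 <;> by_cases hj : j = 0 <;>
      simp only [hk, hj, if_pos, if_neg, if_true, if_false] <;>
      simp [hj, hk, _root_.map_mul, ← hsym, neg_neg, Complex.conj_conj]
  · simp only [dotProduct, Pi.star_apply, star_inv₀, Complex.star_def,
      Complex.conj_ofReal, Finset.sum_const, Finset.card_univ, Fintype.card_fin,
      nsmul_eq_mul]
    push_cast
    linear_combination hs
  · intro x hx
    rw [qm_eval n cc x]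
    have hsupp : c.support ⊆ Finset.Icc (-(n:ℤ)) (n:ℤ) := by
      intro m hm
      have := Finset.le_sup (f := Int.natAbs) hm
      simp only [Finset.mem_Icc]
      omega
    have hS : (∑ m ∈ c.support, c m * Complex.exp (Complex.I * m * x))
        = ∑ m ∈ Finset.Icc (-(n:ℤ)) (n:ℤ), c m * Complex.exp (Complex.I * m * x) := by
      refine Finset.sum_subset hsupp fun m _ hm => ?_
      rw [Finsupp.notMem_support_iff.mp hm, zero_mul]
    set S : ℂ := ∑ m ∈ Finset.Icc (-(n:ℤ)) (n:ℤ), c m * Complex.exp (Complex.I * m * x) with hSdef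
    have hconj : (∑ m ∈ Finset.Icc (-(n:ℤ)) (n:ℤ),
        (starRingEnd ℂ) (c (-m)) * Complex.exp (Complex.I * m * x)) = (starRingEnd ℂ) S := by
      rw [hSdef, map_sum]
      rw [← qm_sum_Icc_neg n (fun m => (starRingEnd ℂ) (c m * Complex.exp (Complex.I * m * x)))]
      refine Finset.sum_congr rfl fun m _ => ?_
      have harg : (starRingEnd ℂ) (Complex.I * (((-m : ℤ)) : ℂ) * ((x:ℝ):ℂ))
          = Complex.I * (m:ℂ) * x := by
        simp only [_root_.map_mul, Complex.conj_I, Complex.conj_ofReal, map_intCast]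
        push_cast
        ring
      rw [_root_.map_mul, ← Complex.exp_conj, harg]
    have hS' : (∑ m ∈ Finset.Icc (-(n:ℤ)) (n:ℤ), cc m * Complex.exp (Complex.I * m * x))
        = (S + (starRingEnd ℂ) S) / 2 := by
      rw [← hconj, hSdef, ← Finset.sum_add_distrib, Finset.sum_div]
      refine Finset.sum_congr rfl fun m _ => ?_
      rw [hcc]
      ring
    rw [hS']
    have hz : (S + (starRingEnd ℂ) S) / 2 - (fstar x : ℂ)
        = ((S.re - fstar x : ℝ) : ℂ) := by
      rw [Complex.add_conj]
      push_cast
      ring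
    rw [hz, Complex.norm_real, Real.norm_eq_abs]
    have h1 : |S.re - fstar x| = |(S - ((fstar x : ℝ) : ℂ)).re| := by
      simp [Complex.sub_re]
    rw [h1]
    refine lt_of_le_of_lt (Complex.abs_re_le_norm _) ?_
    rw [← hS]
    exact hc x hx
end

section
/- (Convergence in L^p, univariate realizable form.) Let 1 ≤ p < ∞, let f* : ℝ → ℝ be p-integrable on [0, 2π] (f* ∈ L^p([0, 2π])), and let ε > 0. Then there exist a dimension d ∈ ℕ, a Hermitian matrix H ∈ M_d(ℂ), a unit vector Γ ∈ ℂ^d, and a Hermitian matrix M ∈ M_d(ℂ) such that (∫_0^{2π} |⟨Γ, e^{ixH} M e^{-ixH} Γ⟩ − f*(x)|^p dx)^{1/p} < ε. -/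
open Matrix

section Aux
open ComplexConjugate

lemma exp_smul_diag {d : ℕ} (v : Fin d → ℂ) (z : ℂ) :
    NormedSpace.exp (z • Matrix.diagonal v) = Matrix.diagonal (fun j => Complex.exp (z * v j)) := by
  rw [← Matrix.diagonal_smul, Matrix.exp_diagonal, Pi.exp_def]
  funext j; simp [Pi.smul_apply, smul_eq_mul, Complex.exp_eq_exp_ℂ]

noncomputable def gammaVec (N : ℕ) : Fin (N + 1) → ℂ := fun _ => ((Real.sqrt (N + 1))⁻¹ : ℝ)

noncomputable def coefMat {N : ℕ} (a : Fin (N + 1) → ℂ) :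
    Matrix (Fin (N + 1)) (Fin (N + 1)) ℂ :=
  fun j k => if j = 0 then (if k = 0 then 0 else ((N : ℂ) + 1) * conj (a k) / 2)
    else (if k = 0 then ((N : ℂ) + 1) * a j / 2 else 0)

lemma star_gammaVec (N : ℕ) : star (gammaVec N) = gammaVec N := by
  funext j
  simp only [Pi.star_apply, gammaVec, RCLike.star_def, Complex.conj_ofReal]

lemma gammaVec_unit (N : ℕ) : star (gammaVec N) ⬝ᵥ gammaVec N = 1 := by
  rw [star_gammaVec]
  simp only [dotProduct, gammaVec]
  rw [Finset.sum_const, Finset.card_univ, Fintype.card_fin, nsmul_eq_mul,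
    ← Complex.ofReal_mul, ← mul_inv, Real.mul_self_sqrt (by positivity)]
  rw [(by push_cast; ring : ((N + 1 : ℕ) : ℂ) = (((N : ℝ) + 1 : ℝ) : ℂ)), ← Complex.ofReal_mul,
    mul_inv_cancel₀ (by positivity), Complex.ofReal_one]

lemma coefMat_isHermitian {N : ℕ} (a : Fin (N + 1) → ℂ) : (coefMat a).IsHermitian := by
  rw [Matrix.IsHermitian]
  funext j k
  by_cases hj : j = 0 <;> by_cases hk : k = 0 <;>
    simp [coefMat, Matrix.conjTranspose_apply, hj, hk, map_div₀]

lemma diag_isHermitian {d : ℕ} (ν : Fin d → ℤ) :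
    (Matrix.diagonal fun j => ((ν j : ℤ) : ℂ)).IsHermitian := by
  rw [Matrix.IsHermitian, Matrix.diagonal_conjTranspose]
  have : (star fun j : Fin d => ((ν j : ℤ) : ℂ)) = fun j : Fin d => ((ν j : ℤ) : ℂ) := by
    funext j
    show star ((ν j : ℤ) : ℂ) = _
    rw [star_intCast]
  rw [this]

lemma dot_expand {d : ℕ} (u v : Fin d → ℂ) (A : Matrix (Fin d) (Fin d) ℂ) :
    u ⬝ᵥ A.mulVec v = ∑ j, ∑ k, u j * (A j k * v k) := by
  simp [dotProduct, Matrix.mulVec, Finset.mul_sum]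

lemma qm_eval_s3 {N : ℕ} (ν : Fin (N + 1) → ℤ) (hν0 : ν 0 = 0) (a : Fin (N + 1) → ℂ) (x : ℝ) :
    quantumModel (Matrix.diagonal fun j => ((ν j : ℤ) : ℂ)) (coefMat a) (gammaVec N) x
      = ∑ i : Fin N, (a i.succ * Complex.exp (Complex.I * x * ((ν i.succ : ℤ) : ℂ))
          + conj (a i.succ) * Complex.exp (-(Complex.I * x) * ((ν i.succ : ℤ) : ℂ))) / 2 := by
  rw [quantumModel, exp_smul_diag, exp_smul_diag, star_gammaVec, dot_expand]
  have hA : ∀ j k, ((Matrix.diagonal fun j => Complex.exp (Complex.I * ↑x * ((ν j : ℤ) : ℂ)))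
      * coefMat a * (Matrix.diagonal fun j => Complex.exp (-(Complex.I * ↑x) * ((ν j : ℤ) : ℂ)))) j k
      = Complex.exp (Complex.I * ↑x * ((ν j : ℤ) : ℂ)) * coefMat a j k
        * Complex.exp (-(Complex.I * ↑x) * ((ν k : ℤ) : ℂ)) := by
    intro j k; rw [Matrix.mul_diagonal, Matrix.diagonal_mul]
  simp only [hA]
  have hsq : (((Real.sqrt (N + 1))⁻¹ : ℝ) : ℂ) * (((Real.sqrt (N + 1))⁻¹ : ℝ) : ℂ)
      * ((N : ℂ) + 1) = 1 := by
    have hpos : (0 : ℝ) < (N : ℝ) + 1 := by positivity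
    rw [← Complex.ofReal_mul, ← mul_inv, Real.mul_self_sqrt hpos.le]
    have : ((N : ℂ) + 1) = (((N : ℝ) + 1 : ℝ) : ℂ) := by push_cast; ring
    rw [this, ← Complex.ofReal_mul, inv_mul_cancel₀ hpos.ne', Complex.ofReal_one]
  rw [Fin.sum_univ_succ]
  simp only [Fin.sum_univ_succ, coefMat, if_pos rfl, if_neg (Fin.succ_ne_zero _),
    hν0, Int.cast_zero, mul_zero, Complex.exp_zero, zero_mul, mul_one, one_mul,
    add_zero, zero_add, Finset.sum_const_zero, gammaVec, if_true]
  rw [← Finset.sum_add_distrib]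
  refine Finset.sum_congr rfl fun i _ => ?_
  set g : ℂ := (((Real.sqrt (N + 1))⁻¹ : ℝ) : ℂ)
  set E1 : ℂ := Complex.exp (Complex.I * ↑x * ((ν i.succ : ℤ) : ℂ))
  set E2 : ℂ := Complex.exp (-(Complex.I * ↑x) * ((ν i.succ : ℤ) : ℂ))
  have : g * ((↑N + 1) * (starRingEnd ℂ) (a i.succ) / 2 * E2 * g)
      + g * (E1 * ((↑N + 1) * a i.succ / 2) * g)
      = (g * g * ((N : ℂ) + 1)) * ((a i.succ * E1 + (starRingEnd ℂ) (a i.succ) * E2) / 2) := by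
    ring
  rw [this, hsq, one_mul]

lemma realize (s : Finset ℤ) (c : ℤ → ℂ) :
    ∃ (d : ℕ) (H M : Matrix (Fin d) (Fin d) ℂ) (Γ : Fin d → ℂ),
      H.IsHermitian ∧ M.IsHermitian ∧ star Γ ⬝ᵥ Γ = 1 ∧
      ∀ x : ℝ, quantumModel H M Γ x =
        (((∑ n ∈ s, c n * Complex.exp (Complex.I * n * x)).re : ℝ) : ℂ) := by
  classical
  set N := s.card with hN
  let e : Fin N → ℤ := fun i => ((s.equivFin.symm i : s) : ℤ)
  let ν : Fin (N + 1) → ℤ := Fin.cases 0 e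
  let a : Fin (N + 1) → ℂ := Fin.cases 0 (fun i => c (e i))
  refine ⟨N + 1, Matrix.diagonal fun j => ((ν j : ℤ) : ℂ), coefMat a, gammaVec N,
    diag_isHermitian ν, coefMat_isHermitian a, gammaVec_unit N, fun x => ?_⟩
  rw [qm_eval_s3 ν rfl a x]
  have key : ∀ g : ℤ → ℂ, (∑ n ∈ s, g n) = ∑ i : Fin N, g (e i) := by
    intro g
    rw [← Finset.sum_coe_sort s g, ← Equiv.sum_comp s.equivFin.symm (fun b : s => g (b : ℤ))]
  have hre : ∀ z : ℂ, ((z.re : ℝ) : ℂ) = (z + conj z) / 2 := by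
    intro z
    rw [Complex.add_conj]
    push_cast
    ring
  rw [hre, map_sum, key (fun n => c n * Complex.exp (Complex.I * n * x)),
    key (fun n => conj (c n * Complex.exp (Complex.I * n * x))),
    ← Finset.sum_add_distrib, Finset.sum_div]
  refine Finset.sum_congr rfl fun i _ => ?_
  have hν : ν i.succ = e i := by simp [ν]
  have ha : a i.succ = c (e i) := by simp [a]
  rw [hν, ha]
  congr 2
  · congr 1; push_cast; ring
  · rw [RingHom.map_mul, ← Complex.exp_conj]
    congr 1
    simp only [RingHom.map_mul, Complex.conj_I, Complex.conj_ofReal, map_intCast]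
    push_cast
    ring

section Approx
open MeasureTheory AddCircle Real
open scoped ENNReal

set_option maxHeartbeats 1000000 in
lemma approx (p : ℝ) (hp : 1 ≤ p) (fstar : ℝ → ℝ)
    (hfstar : MemLp fstar (ENNReal.ofReal p) (volume.restrict (Set.Icc 0 (2 * Real.pi))))
    (ε : ℝ) (hε : 0 < ε) :
    ∃ (s : Finset ℤ) (c : ℤ → ℂ),
      (∫ x in (0:ℝ)..(2 * Real.pi),
        ‖(((∑ n ∈ s, c n * Complex.exp (Complex.I * n * x)).re : ℝ) : ℂ)
          - (fstar x : ℂ)‖ ^ p) ^ (1/p) < ε := by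
  classical
  have hppos : 0 < p := lt_of_lt_of_le one_pos hp
  set T : ℝ := 2 * Real.pi with hT
  have hTpos : 0 < T := by rw [hT]; positivity
  have hT1 : 1 ≤ T := by rw [hT]; nlinarith [Real.pi_gt_three]
  haveI hTfact : Fact (0 < T) := ⟨hTpos⟩
  set q : ℝ≥0∞ := ENNReal.ofReal p with hq
  haveI : Fact (1 ≤ q) := ⟨ENNReal.one_le_ofReal.mpr hp⟩
  have hq0 : q ≠ 0 := by
    rw [hq, Ne, ENNReal.ofReal_eq_zero]
    linarith
  have hqtop : q ≠ ∞ := ENNReal.ofReal_ne_top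
  have hqto : q.toReal = p := ENNReal.toReal_ofReal hppos.le
  obtain ⟨g, hgsm, hfg⟩ := hfstar.1
  have hIoc_le : volume.restrict (Set.Ioc (0:ℝ) (0 + T)) ≤ volume.restrict (Set.Icc 0 T) := by
    rw [zero_add]
    exact Measure.restrict_mono Set.Ioc_subset_Icc_self le_rfl
  have hfg' : fstar =ᵐ[volume.restrict (Set.Ioc (0:ℝ) (0 + T))] g :=
    hfg.filter_mono (ae_mono hIoc_le)
  have hf_Ioc : MemLp fstar q (volume.restrict (Set.Ioc (0:ℝ) (0 + T))) :=
    hfstar.mono_measure hIoc_le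
  -- lift to the circle
  set F : AddCircle T → ℂ := AddCircle.liftIoc T 0 (fun x => ((g x : ℝ) : ℂ)) with hF
  have hFmeas : Measurable F := by
    have : F = (fun y : Set.Ioc (0:ℝ) (0 + T) => ((g (y : ℝ) : ℝ) : ℂ)) ∘
        (AddCircle.measurableEquivIoc T 0) := rfl
    rw [this]
    exact (Complex.measurable_ofReal.comp (hgsm.measurable.comp measurable_subtype_coe)).comp
      (AddCircle.measurableEquivIoc T 0).measurable
  have hae : (fun x : ℝ => F ↑x) =ᵐ[volume.restrict (Set.Ioc (0:ℝ) (0 + T))]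
      (fun x => ((fstar x : ℝ) : ℂ)) := by
    filter_upwards [ae_restrict_mem measurableSet_Ioc, hfg'] with x hx hgx
    rw [hF, AddCircle.liftIoc_coe_apply hx, hgx]
  have hmk : MeasurePreserving ((↑) : ℝ → AddCircle T)
      (volume.restrict (Set.Ioc (0:ℝ) (0 + T))) volume :=
    AddCircle.measurePreserving_mk T 0
  have hmk_ae : AEMeasurable ((↑) : ℝ → AddCircle T)
      (volume.restrict (Set.Ioc (0:ℝ) (0 + T))) := hmk.measurable.aemeasurable
  have hFvol : MemLp F q (volume : Measure (AddCircle T)) := by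
    rw [← hmk.map_eq]
    refine (memLp_map_measure_iff ?_ hmk_ae).2 ?_
    · rw [hmk.map_eq]
      exact hFmeas.aestronglyMeasurable
    · exact MemLp.ae_eq hae.symm (hf_Ioc.ofReal)
  have hT0' : ENNReal.ofReal T ≠ 0 := by
    rw [Ne, ENNReal.ofReal_eq_zero]
    linarith
  have hFhaar : MemLp F q (haarAddCircle : Measure (AddCircle T)) := by
    have hh : (haarAddCircle : Measure (AddCircle T))
        = (ENNReal.ofReal T)⁻¹ • (volume : Measure (AddCircle T)) := by
      rw [AddCircle.volume_eq_smul_haarAddCircle, smul_smul,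
        ENNReal.inv_mul_cancel hT0' ENNReal.ofReal_ne_top, one_smul]
    rw [hh]
    exact hFvol.smul_measure (ENNReal.inv_ne_top.mpr hT0')
  -- density of trig polynomials
  set δ : ℝ := ε / (T + 1) with hδ
  have hδpos : 0 < δ := by positivity
  have hFmem : hFhaar.toLp F ∈
      (Submodule.span ℂ (Set.range (fourierLp (T := T) q))).topologicalClosure := by
    rw [span_fourierLp_closure_eq_top hqtop]; trivial
  obtain ⟨P, hPmem, hPdist⟩ := Metric.mem_closure_iff.1 hFmem δ hδpos
  obtain ⟨c, hc⟩ := Finsupp.mem_span_range_iff_exists_finsupp.1 hPmem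
  set Pc : C(AddCircle T, ℂ) := c.sum fun n z => z • fourier n with hPc
  have hPeq : (ContinuousMap.toLp q haarAddCircle ℂ) Pc = P := by
    rw [← hc, hPc, map_finsuppSum]
    exact Finsupp.sum_congr fun n _ => (ContinuousMap.toLp q haarAddCircle ℂ).map_smul (c n) (fourier n)
  have hnorm : eLpNorm (F - ⇑Pc) q haarAddCircle < ENNReal.ofReal δ := by
    have hcoe : (⇑(hFhaar.toLp F - (ContinuousMap.toLp q haarAddCircle ℂ) Pc) :
        AddCircle T → ℂ) =ᵐ[haarAddCircle] F - ⇑Pc := by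
      filter_upwards [Lp.coeFn_sub (hFhaar.toLp F) ((ContinuousMap.toLp q haarAddCircle ℂ) Pc),
        hFhaar.coeFn_toLp, ContinuousMap.coeFn_toLp (p := q) (𝕜 := ℂ) haarAddCircle Pc] with y h1 h2 h3
      rw [h1, Pi.sub_apply, h2, h3, Pi.sub_apply]
    rw [← eLpNorm_congr_ae hcoe]
    rw [← hPeq, dist_eq_norm, Lp.norm_def] at hPdist
    exact (ENNReal.lt_ofReal_iff_toReal_lt (Lp.eLpNorm_ne_top _)).2 hPdist
  have hvolnorm : eLpNorm (F - ⇑Pc) q (volume : Measure (AddCircle T)) < ENNReal.ofReal ε := by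
    rw [AddCircle.volume_eq_smul_haarAddCircle, eLpNorm_smul_measure_of_ne_top hqtop]
    have hexp : ((1 : ℝ≥0∞)/q).toReal ≤ 1 := by
      rw [one_div, ENNReal.toReal_inv, hqto]
      rw [inv_le_one_iff₀]
      right; exact hp
    have h1T : (1:ℝ≥0∞) ≤ ENNReal.ofReal T := by
      rw [← ENNReal.ofReal_one]
      exact ENNReal.ofReal_le_ofReal hT1
    have hK : (ENNReal.ofReal T) ^ ((1 : ℝ≥0∞)/q).toReal ≤ ENNReal.ofReal T := by
      calc (ENNReal.ofReal T) ^ ((1 : ℝ≥0∞)/q).toReal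
          ≤ (ENNReal.ofReal T) ^ (1:ℝ) := ENNReal.rpow_le_rpow_of_exponent_le h1T hexp
        _ = ENNReal.ofReal T := ENNReal.rpow_one _
    have hlt : eLpNorm (F - ⇑Pc) q haarAddCircle < ENNReal.ofReal δ := hnorm
    calc (ENNReal.ofReal T) ^ ((1 : ℝ≥0∞)/q).toReal • eLpNorm (F - ⇑Pc) q haarAddCircle
        ≤ (ENNReal.ofReal T) * eLpNorm (F - ⇑Pc) q haarAddCircle := by
          rw [smul_eq_mul]
          exact mul_le_mul_left hK _
      _ < (ENNReal.ofReal T) * ENNReal.ofReal δ := by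
          exact ENNReal.mul_lt_mul_right hT0' ENNReal.ofReal_ne_top hlt
      _ ≤ ENNReal.ofReal ε := by
          rw [← ENNReal.ofReal_mul hTpos.le]
          refine ENNReal.ofReal_le_ofReal ?_
          calc T * (ε / (T + 1)) = ε * (T / (T+1)) := by ring
            _ ≤ ε * 1 := by
                refine mul_le_mul_of_nonneg_left ?_ hε.le
                rw [div_le_one (by linarith)]
                linarith
            _ = ε := mul_one ε
  -- back to the real line
  set Pf : ℝ → ℂ := fun x => ∑ n ∈ c.support, c n * Complex.exp (Complex.I * n * x) with hPf
  have hPc_apply : ∀ x : ℝ, Pc ↑x = Pf x := by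
    intro x
    rw [hPc, hPf, Finsupp.sum]
    rw [ContinuousMap.coe_sum, Finset.sum_apply]
    refine Finset.sum_congr rfl fun n _ => ?_
    have harg : 2 * (Real.pi : ℂ) * Complex.I * n * x / (T : ℂ) = Complex.I * n * x := by
      have hπ : (Real.pi : ℂ) ≠ 0 := Complex.ofReal_ne_zero.mpr Real.pi_ne_zero
      rw [hT]
      push_cast
      field_simp
    rw [ContinuousMap.coe_smul, Pi.smul_apply, smul_eq_mul, fourier_coe_apply, harg]
  set h : ℝ → ℂ := fun x => (fstar x : ℂ) - Pf x with hh
  have hsub_ae : ((F - ⇑Pc) ∘ ((↑) : ℝ → AddCircle T))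
      =ᵐ[volume.restrict (Set.Ioc (0:ℝ) (0 + T))] h := by
    filter_upwards [hae] with x hx
    have hx' : F ↑x = (fstar x : ℂ) := hx
    calc ((F - ⇑Pc) ∘ ((↑) : ℝ → AddCircle T)) x = F ↑x - Pc ↑x := rfl
      _ = (fstar x : ℂ) - Pf x := by rw [hx', hPc_apply]
      _ = h x := rfl
  have hhnorm : eLpNorm h q (volume.restrict (Set.Ioc (0:ℝ) (0 + T))) < ENNReal.ofReal ε := by
    have hsm : AEStronglyMeasurable (F - ⇑Pc) (Measure.map ((↑) : ℝ → AddCircle T)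
        (volume.restrict (Set.Ioc (0:ℝ) (0 + T)))) := by
      rw [hmk.map_eq]
      exact (hFmeas.sub Pc.continuous.measurable).aestronglyMeasurable
    have hmapeq := eLpNorm_map_measure (p := q) hsm hmk_ae
    rw [hmk.map_eq] at hmapeq
    rw [← eLpNorm_congr_ae hsub_ae, ← hmapeq]
    exact hvolnorm
  have hPfcont : Continuous Pf := by
    rw [hPf]
    refine continuous_finset_sum _ fun n _ => ?_
    exact continuous_const.mul (Complex.continuous_exp.comp (by continuity))
  have hhsm : AEStronglyMeasurable h (volume.restrict (Set.Ioc (0:ℝ) (0 + T))) :=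
    (hf_Ioc.ofReal.aestronglyMeasurable).sub hPfcont.aestronglyMeasurable
  have hhmem : MemLp h q (volume.restrict (Set.Ioc (0:ℝ) (0 + T))) :=
    ⟨hhsm, lt_of_lt_of_le hhnorm le_top⟩
  have hform := hhmem.eLpNorm_eq_integral_rpow_norm hq0 hqtop
  rw [hform, hqto] at hhnorm
  have hInt : (∫ x in Set.Ioc (0:ℝ) (0 + T), ‖h x‖ ^ p ∂volume) ^ p⁻¹ < ε := by
    rw [ENNReal.ofReal_lt_ofReal_iff hε] at hhnorm
    exact hhnorm
  have hIntble : Integrable (fun x => ‖h x‖ ^ p) (volume.restrict (Set.Ioc (0:ℝ) (0 + T))) := by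
    have := hhmem.integrable_norm_rpow hq0 hqtop
    rwa [hqto] at this
  refine ⟨c.support, fun n => c n, ?_⟩
  have hgoal : (∫ x in (0:ℝ)..T,
      ‖(((Pf x).re : ℝ) : ℂ) - (fstar x : ℂ)‖ ^ p) ^ (1/p) < ε := by
    rw [intervalIntegral.integral_of_le hTpos.le]
    have hmono : (∫ x in Set.Ioc (0:ℝ) T, ‖(((Pf x).re : ℝ) : ℂ) - (fstar x : ℂ)‖ ^ p ∂volume)
        ≤ ∫ x in Set.Ioc (0:ℝ) (0 + T), ‖h x‖ ^ p ∂volume := by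
      rw [zero_add] at hIntble ⊢
      refine integral_mono_of_nonneg (Filter.Eventually.of_forall fun x => by positivity)
        hIntble (Filter.Eventually.of_forall fun x => ?_)
      have h1 : ‖(((Pf x).re : ℝ) : ℂ) - ((fstar x : ℝ) : ℂ)‖ ≤ ‖h x‖ := by
      -- |(Pf x).re - fstar x| = |(h x).re| ≤ abs (h x)
        rw [← Complex.ofReal_sub, Complex.norm_real, Real.norm_eq_abs]
        have h2 : (Pf x).re - fstar x = -((h x).re) := by
          have hx2 : h x = (fstar x : ℂ) - Pf x := rfl
          rw [hx2, Complex.sub_re, Complex.ofReal_re]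
          ring
        rw [h2, abs_neg]
        exact Complex.abs_re_le_norm _
      exact Real.rpow_le_rpow (norm_nonneg _) h1 hppos.le
    have hnn : (0:ℝ) ≤ ∫ x in Set.Ioc (0:ℝ) T, ‖(((Pf x).re : ℝ) : ℂ) - (fstar x : ℂ)‖ ^ p ∂volume :=
      integral_nonneg fun x => by positivity
    calc (∫ x in Set.Ioc (0:ℝ) T, ‖(((Pf x).re : ℝ) : ℂ) - (fstar x : ℂ)‖ ^ p ∂volume) ^ (1/p)
        ≤ (∫ x in Set.Ioc (0:ℝ) (0 + T), ‖h x‖ ^ p ∂volume) ^ (1/p) :=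
          Real.rpow_le_rpow hnn hmono (by positivity)
      _ < ε := by
          rw [one_div]
          exact hInt
  exact hgoal

end Approx
end Aux

/-- Convergence in `L^p`: quantum models approximate `p`-integrable functions on
`[0, 2π]` in the `L^p` norm. -/
theorem quantumModel_dense_Lp (p : ℝ) (hp : 1 ≤ p) (fstar : ℝ → ℝ)
    (hfstar : MeasureTheory.MemLp fstar (ENNReal.ofReal p)
      (MeasureTheory.volume.restrict (Set.Icc 0 (2 * Real.pi))))
    (ε : ℝ) (hε : 0 < ε) :
    ∃ (d : ℕ) (H M : Matrix (Fin d) (Fin d) ℂ) (Γ : Fin d → ℂ),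
      H.IsHermitian ∧ M.IsHermitian ∧ star Γ ⬝ᵥ Γ = 1 ∧
      (∫ x in (0 : ℝ)..(2 * Real.pi),
        ‖quantumModel H M Γ x - (fstar x : ℂ)‖ ^ p) ^ (1 / p) < ε := by
  obtain ⟨s, c, hsc⟩ := approx p hp fstar hfstar ε hε
  obtain ⟨d, H, M, Γ, hH, hM, hΓ, hqm⟩ := realize s c
  refine ⟨d, H, M, Γ, hH, hM, hΓ, ?_⟩
  simp only [hqm]
  exact hsc
end

section
/- (Convergence in H¹, univariate realizable form.) Let f* : ℝ → ℝ be twice continuously differentiable, let 0 < α < β < 2π, and let ε > 0. Then there exist a dimension d ∈ ℕ, a Hermitian matrix H ∈ M_d(ℂ), a unit vector Γ ∈ ℂ^d, and a Hermitian matrix M ∈ M_d(ℂ) such that, writing f(x) = ⟨Γ, e^{ixH} M e^{-ixH} Γ⟩ (a real-valued smooth function of x), one has ∫_α^β (f(x) − f*(x))² dx + ∫_α^β (f'(x) − f*'(x))² dx < ε, where f' denotes the derivative of f. -/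
open Matrix

/-! ### Auxiliary material -/

namespace QMH1

lemma quantumModel_diagonal {d : ℕ} (lam : Fin d → ℝ) (M : Matrix (Fin d) (Fin d) ℂ)
    (Γ : Fin d → ℂ) (x : ℝ) :
    quantumModel (Matrix.diagonal fun j => (lam j : ℂ)) M Γ x =
      ∑ j, ∑ k, star (Γ j) * Complex.exp (Complex.I * x * lam j) * M j k *
        Complex.exp (-(Complex.I * x * lam k)) * Γ k := by
  unfold quantumModel
  rw [← Matrix.diagonal_smul, ← Matrix.diagonal_smul, Matrix.exp_diagonal, Matrix.exp_diagonal]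
  simp only [Matrix.mulVec, dotProduct, Matrix.diagonal_mul, Matrix.mul_diagonal,
    Finset.mul_sum, Pi.star_apply, Pi.coe_exp, Pi.smul_apply, smul_eq_mul,
    ← Complex.exp_eq_exp_ℂ]
  refine Finset.sum_congr rfl fun j _ => Finset.sum_congr rfl fun k _ => ?_
  ring

noncomputable def trigTerm (c : ℂ) (ν : ℝ) (x : ℝ) : ℝ :=
  2 * (c * Complex.exp (↑ν * ↑x * Complex.I)).re

lemma realize (n : ℕ) (c : Fin n → ℂ) (ν : Fin n → ℝ) :
    ∃ (H M : Matrix (Fin (n+1)) (Fin (n+1)) ℂ) (Γ : Fin (n+1) → ℂ),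
      H.IsHermitian ∧ M.IsHermitian ∧ star Γ ⬝ᵥ Γ = 1 ∧
      ∀ x : ℝ, quantumModel H M Γ x = ((∑ k, trigTerm (c k) (ν k) x : ℝ) : ℂ) := by
  have hs : Real.sqrt ((n:ℝ)+1) * Real.sqrt ((n:ℝ)+1) = (n:ℝ)+1 :=
    Real.mul_self_sqrt (by positivity)
  have hsne : Real.sqrt ((n:ℝ)+1) ≠ 0 := by positivity
  set lam : Fin (n+1) → ℝ := Fin.cons 0 (fun k => -ν k) with hlam
  set w : Fin (n+1) → Fin (n+1) → ℂ :=
    Fin.cons (Fin.cons 0 (fun k => c k))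
      (fun j' => Fin.cons ((starRingEnd ℂ) (c j')) (fun _ => 0)) with hw
  set s : ℝ := (Real.sqrt ((n:ℝ)+1))⁻¹ with hsdef
  refine ⟨Matrix.diagonal fun j => (lam j : ℂ),
    Matrix.of fun j k => ((n:ℂ)+1) * w j k,
    fun _ => (s : ℂ), ?_, ?_, ?_, ?_⟩
  · have hstar : (star fun j : Fin (n+1) => ((lam j : ℝ) : ℂ)) = fun j => ((lam j : ℝ) : ℂ) :=
      funext fun j => Complex.conj_ofReal _
    rw [Matrix.IsHermitian, Matrix.diagonal_conjTranspose, hstar]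
  · rw [Matrix.IsHermitian]
    ext j k
    simp only [Matrix.conjTranspose_apply, Matrix.of_apply, star_mul']
    induction j using Fin.cases with
    | zero => induction k using Fin.cases with
      | zero => simp [hw]
      | succ k => simp [hw, RCLike.star_def]
    | succ j => induction k using Fin.cases with
      | zero => simp [hw, RCLike.star_def]
      | succ k => simp [hw]
  · simp only [dotProduct, Pi.star_apply, RCLike.star_def, Complex.conj_ofReal]
    rw [Finset.sum_const, Finset.card_univ, Fintype.card_fin, nsmul_eq_mul,
      ← Complex.ofReal_mul]
    have : s * s = ((n:ℝ)+1)⁻¹ := by rw [hsdef, ← mul_inv, hs]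
    rw [this]
    push_cast
    have hne : ((n:ℂ)+1) ≠ 0 := Nat.cast_add_one_ne_zero n
    rw [mul_inv_cancel₀ hne]
  · intro x
    rw [quantumModel_diagonal]
    have key : ∀ j k : Fin (n+1), star ((s:ℂ)) * Complex.exp (Complex.I * x * lam j) *
        (Matrix.of fun j k => ((n:ℂ)+1) * w j k) j k *
        Complex.exp (-(Complex.I * x * lam k)) * (s:ℂ)
        = Complex.exp (Complex.I * x * lam j) * w j k *
          Complex.exp (-(Complex.I * x * lam k)) := by
      intro j k
      simp only [Matrix.of_apply, RCLike.star_def, Complex.conj_ofReal]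
      have : ((s:ℂ)) * ((n:ℂ)+1) * (s:ℂ) = 1 := by
        have h1 : s * ((n:ℝ)+1) * s = 1 := by
          rw [hsdef]; field_simp; rw [Real.sq_sqrt (by positivity)]
        calc ((s:ℂ)) * ((n:ℂ)+1) * (s:ℂ) = ((s * ((n:ℝ)+1) * s : ℝ) : ℂ) := by push_cast; ring
        _ = 1 := by rw [h1]; norm_num
      calc _ = ((s:ℂ) * ((n:ℂ)+1) * (s:ℂ)) * (Complex.exp (Complex.I * x * lam j) * w j k *
          Complex.exp (-(Complex.I * x * lam k))) := by ring
      _ = _ := by rw [this, one_mul]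
    simp only [key]
    simp only [hw, hlam, Fin.sum_univ_succ, Fin.cons_zero, Fin.cons_succ, mul_zero, zero_mul,
      Finset.sum_const_zero, add_zero, zero_add, Complex.ofReal_zero, Complex.ofReal_neg,
      Complex.exp_zero, mul_one, one_mul]
    rw [← Finset.sum_add_distrib, Complex.ofReal_sum]
    refine Finset.sum_congr rfl fun k _ => ?_
    unfold trigTerm
    rw [← Complex.add_conj]
    simp only [_root_.map_mul, ← Complex.exp_conj, Complex.conj_I, Complex.conj_ofReal]
    ring_nf
    simp [Complex.exp_zero]

/-! ### Stone–Weierstrass for trigonometric polynomials on `[α, β] ⊂ (0, 2π)` -/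

variable {α β : ℝ}

noncomputable def Zc (α β : ℝ) (n : ℤ) : C(↥(Set.Icc α β), ℂ) :=
  ⟨fun t => Complex.exp (n * (t:ℝ) * Complex.I), by
    exact Complex.continuous_exp.comp (((continuous_const.mul
      (Complex.continuous_ofReal.comp continuous_subtype_val))).mul continuous_const)⟩

lemma Zc_apply (n : ℤ) (t : ↥(Set.Icc α β)) :
    Zc α β n t = Complex.exp (n * (t:ℝ) * Complex.I) := rfl

lemma Zc_mul (n m : ℤ) : Zc α β n * Zc α β m = Zc α β (n + m) := by
  ext t
  simp only [ContinuousMap.mul_apply, Zc_apply, ← Complex.exp_add]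
  congr 1
  push_cast
  ring

lemma Zc_zero : Zc α β 0 = 1 := by
  ext t
  simp [Zc_apply]

lemma Zc_star (n : ℤ) : star (Zc α β n) = Zc α β (-n) := by
  ext t
  simp only [ContinuousMap.star_apply, Zc_apply, RCLike.star_def, ← Complex.exp_conj]
  congr 1
  simp [Complex.conj_ofReal]

noncomputable def trigAlg (α β : ℝ) : StarSubalgebra ℂ C(↥(Set.Icc α β), ℂ) where
  carrier := Submodule.span ℂ (Set.range (Zc α β))
  mul_mem' := by
    intro a b ha hb
    have hsub : Submodule.span ℂ (Set.range (Zc α β)) * Submodule.span ℂ (Set.range (Zc α β)) ≤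
        Submodule.span ℂ (Set.range (Zc α β)) := by
      rw [Submodule.span_mul_span]
      refine Submodule.span_le.2 ?_
      rintro f ⟨f₁, ⟨n, rfl⟩, f₂, ⟨m, rfl⟩, rfl⟩
      exact Submodule.subset_span ⟨n + m, (Zc_mul n m).symm⟩
    exact hsub (Submodule.mul_mem_mul ha hb)
  one_mem' := by
    have h : Zc α β 0 ∈ Submodule.span ℂ (Set.range (Zc α β)) := Submodule.subset_span ⟨0, rfl⟩
    rwa [Zc_zero] at h
  add_mem' := fun ha hb => Submodule.add_mem _ ha hb
  zero_mem' := Submodule.zero_mem _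
  algebraMap_mem' := by
    intro c
    rw [Algebra.algebraMap_eq_smul_one]
    refine Submodule.smul_mem _ _ ?_
    have h : Zc α β 0 ∈ Submodule.span ℂ (Set.range (Zc α β)) := Submodule.subset_span ⟨0, rfl⟩
    rwa [Zc_zero] at h
  star_mem' := by
    intro a ha
    refine Submodule.span_induction ?_ ?_ ?_ ?_ ha
    · rintro f ⟨n, rfl⟩
      have h : Zc α β (-n) ∈ Submodule.span ℂ (Set.range (Zc α β)) := Submodule.subset_span ⟨-n, rfl⟩
      rwa [← Zc_star] at h
    · simp
    · intro f g _ _ hf hg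
      rw [star_add]; exact Submodule.add_mem _ hf hg
    · intro c f _ hf
      rw [star_smul]
      exact Submodule.smul_mem _ _ hf

open Real in
lemma trigAlg_separates (h2π : β - α < 2 * Real.pi) :
    (trigAlg α β).SeparatesPoints := by
  intro x y hxy
  refine ⟨_, ⟨Zc α β 1, Submodule.subset_span ⟨1, rfl⟩, rfl⟩, ?_⟩
  simp only [Zc_apply]
  intro h
  apply hxy
  rw [Complex.exp_eq_exp_iff_exists_int] at h
  obtain ⟨n, hn⟩ := h
  have hr : (x:ℝ) - (y:ℝ) = n * (2 * Real.pi) := by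
    have : ((x:ℝ) : ℂ) = ((y:ℝ) : ℂ) + n * (2 * Real.pi) := by
      have hI : ((x:ℝ) : ℂ) * Complex.I = (((y:ℝ) : ℂ) + n * (2 * Real.pi)) * Complex.I := by
        push_cast at hn ⊢
        linear_combination hn
      exact mul_right_cancel₀ Complex.I_ne_zero hI
    have hre : (x:ℝ) = (y:ℝ) + n * (2 * Real.pi) := by exact_mod_cast this
    linarith
  have hb1 : |(x:ℝ) - (y:ℝ)| < 2 * Real.pi := by
    have hx := x.2
    have hy := y.2
    rw [Set.mem_Icc] at hx hy
    rw [abs_sub_lt_iff]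
    constructor <;> linarith
  have hn0 : n = 0 := by
    by_contra hn0
    have h1 : (1:ℝ) ≤ |(n:ℝ)| := by
      exact_mod_cast Int.one_le_abs (by exact_mod_cast hn0)
    have : 2 * Real.pi ≤ |(x:ℝ) - (y:ℝ)| := by
      rw [hr, abs_mul]
      have h2 : (0:ℝ) < 2 * Real.pi := by positivity
      calc 2 * Real.pi = 1 * |2 * Real.pi| := by rw [one_mul, abs_of_pos h2]
      _ ≤ |(n:ℝ)| * |2 * Real.pi| := mul_le_mul_of_nonneg_right h1 (abs_nonneg _)
    linarith
  apply Subtype.ext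
  rw [hn0] at hr
  push_cast at hr
  linarith

lemma trig_approx (hαβ : α < β) (h2π : β - α < 2 * Real.pi)
    (g : ℝ → ℝ) (hg : Continuous g) {δ : ℝ} (hδ : 0 < δ) :
    ∃ (sf : Finset ℤ) (a : ℤ → ℂ), ∀ x ∈ Set.Icc α β,
      ‖(∑ n ∈ sf, a n * Complex.exp (n * x * Complex.I)) - g x‖ ≤ δ := by
  set f : C(↥(Set.Icc α β), ℂ) :=
    ⟨fun t => ((g t : ℝ) : ℂ), Complex.continuous_ofReal.comp (hg.comp continuous_subtype_val)⟩
    with hf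
  have htop := ContinuousMap.starSubalgebra_topologicalClosure_eq_top_of_separatesPoints
    (trigAlg α β) (trigAlg_separates h2π)
  have hmem : f ∈ closure ((trigAlg α β : Set C(↥(Set.Icc α β), ℂ))) := by
    rw [← StarSubalgebra.topologicalClosure_coe, htop]
    trivial
  rw [Metric.mem_closure_iff] at hmem
  obtain ⟨h, hhA, hdist⟩ := hmem δ hδ
  have hhS : h ∈ Submodule.span ℂ (Set.range (Zc α β)) := hhA
  rw [Finsupp.mem_span_range_iff_exists_finsupp] at hhS
  obtain ⟨cf, hcf⟩ := hhS
  refine ⟨cf.support, cf, fun x hx => ?_⟩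
  have hev : (∑ n ∈ cf.support, (cf n : ℂ) * Complex.exp (n * x * Complex.I)) = h ⟨x, hx⟩ := by
    rw [← hcf, Finsupp.sum]
    simp [Zc_apply, smul_eq_mul]
  rw [hev]
  have h1 : ‖h ⟨x, hx⟩ - ((g x : ℝ) : ℂ)‖ = dist (h ⟨x, hx⟩) (f ⟨x, hx⟩) := by
    rw [Complex.dist_eq]; rfl
  rw [h1]
  calc dist (h ⟨x, hx⟩) (f ⟨x, hx⟩) ≤ dist h f := ContinuousMap.dist_apply_le_dist _
  _ = dist f h := dist_comm _ _
  _ ≤ δ := le_of_lt hdist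

/-! ### Calculus facts about `trigTerm` -/

lemma trigTerm_continuous (c : ℂ) (ν : ℝ) : Continuous (trigTerm c ν) := by
  unfold trigTerm
  refine continuous_const.mul (Complex.continuous_re.comp ?_)
  exact continuous_const.mul (Complex.continuous_exp.comp
    ((continuous_const.mul Complex.continuous_ofReal).mul continuous_const))

lemma trigTerm_hasDerivAt (c : ℂ) (ν : ℝ) (x : ℝ) :
    HasDerivAt (trigTerm c ν) (trigTerm (c * (↑ν * Complex.I)) ν x) x := by
  have h1 : HasDerivAt (fun y : ℝ => ((ν:ℂ) * ↑y * Complex.I)) ((ν:ℂ) * Complex.I) x := by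
    have := ((Complex.ofRealCLM.hasDerivAt (x := x)).const_mul ((ν:ℂ))).mul_const Complex.I
    simpa using this
  have h2 := (h1.cexp.const_mul c)
  have h3 := (Complex.reCLM.hasFDerivAt.comp_hasDerivAt x h2).const_mul (2:ℝ)
  refine h3.congr_deriv ?_
  unfold trigTerm
  simp only [Complex.reCLM_apply]
  congr 1
  ring

lemma two_mul_re (z : ℂ) : 2 * z.re = ((2:ℂ) * z).re := by
  simp [Complex.mul_re]

lemma trigTerm_half (c : ℂ) (ν x : ℝ) :
    trigTerm (c/2) ν x = (c * Complex.exp (↑ν * ↑x * Complex.I)).re := by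
  unfold trigTerm
  rw [two_mul_re]
  congr 1
  ring

end QMH1

open QMH1 in
/-- Convergence in `H¹`: quantum models approximate `C²` functions on `[α, β] ⊂ (0, 2π)`
simultaneously in value and derivative in the `L²` sense. -/
theorem quantumModel_dense_H1 (fstar : ℝ → ℝ) (hfstar : ContDiff ℝ 2 fstar)
    (α β : ℝ) (hα : 0 < α) (hαβ : α < β) (hβ : β < 2 * Real.pi)
    (ε : ℝ) (hε : 0 < ε) :
    ∃ (d : ℕ) (H M : Matrix (Fin d) (Fin d) ℂ) (Γ : Fin d → ℂ),
      H.IsHermitian ∧ M.IsHermitian ∧ star Γ ⬝ᵥ Γ = 1 ∧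
      (∀ x : ℝ, (quantumModel H M Γ x).im = 0) ∧
      (∫ x in α..β, ((quantumModel H M Γ x).re - fstar x) ^ 2) +
        (∫ x in α..β,
          (deriv (fun y => (quantumModel H M Γ y).re) x - deriv fstar x) ^ 2) < ε := by
  classical
  have hba : (0:ℝ) < β - α := by linarith
  set g : ℝ → ℝ := deriv fstar with hgdef
  have hgc : Continuous g := hfstar.continuous_deriv one_le_two
  have hfd : ∀ x, HasDerivAt fstar (g x) x := fun x =>
    ((hfstar.differentiable two_ne_zero).differentiableAt).hasDerivAt
  set T : ℝ := 8 * (β - α) * ((β - α)^2 + 1) with hTdef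
  have hT : 0 < T := by positivity
  set δ : ℝ := Real.sqrt (ε / T) with hδdef
  have hδpos : 0 < δ := Real.sqrt_pos.2 (div_pos hε hT)
  have hδsq : δ^2 = ε / T := Real.sq_sqrt (le_of_lt (div_pos hε hT))
  obtain ⟨sf, a, ha⟩ := trig_approx hαβ (by linarith) g hgc hδpos
  set sf' : Finset ℤ := sf.erase 0 with hsf'
  set A0 : ℂ := if 0 ∈ sf then a 0 else 0 with hA0def
  have hsplit : ∀ x : ℝ, (∑ n ∈ sf, a n * Complex.exp (n * x * Complex.I)) =
      A0 + ∑ n ∈ sf', a n * Complex.exp (n * x * Complex.I) := by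
    intro x
    by_cases h0 : 0 ∈ sf
    · rw [← Finset.add_sum_erase _ _ h0, hA0def, if_pos h0]
      simp [hsf']
    · rw [hsf', Finset.erase_eq_of_notMem h0, hA0def, if_neg h0]
      simp
  set m : ℕ := sf'.card with hm
  set en : Fin m → ℤ := fun j => ((sf'.equivFin.symm j : sf') : ℤ) with hen
  have hen_mem : ∀ j, en j ∈ sf' := fun j => (sf'.equivFin.symm j).2
  have hen_ne : ∀ j, (en j) ≠ 0 := fun j => Finset.ne_of_mem_erase (hen_mem j)
  have hen_neC : ∀ j, ((en j : ℤ) : ℂ) ≠ 0 := fun j => Int.cast_ne_zero.mpr (hen_ne j)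
  have hensum : ∀ F : ℤ → ℝ, ∑ j : Fin m, F (en j) = ∑ n ∈ sf', F n := by
    intro F
    rw [← Finset.sum_coe_sort sf' F]
    exact Equiv.sum_comp sf'.equivFin.symm (fun i => F ↑i)
  set A : ℝ := ‖A0‖ with hAdef
  have hA0nn : 0 ≤ A := norm_nonneg _
  set μ : ℝ := min ((β+1)⁻¹) (δ / (2*(β+1)*(A+1))) with hμdef
  have hβ1 : (0:ℝ) < β + 1 := by linarith
  have h2A : (0:ℝ) < 2*(β+1)*(A+1) := by
    apply mul_pos (by linarith) (by linarith)
  have hμpos : 0 < μ := lt_min (inv_pos.2 hβ1) (div_pos hδpos h2A)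
  have hμC : (μ:ℂ) ≠ 0 := Complex.ofReal_ne_zero.mpr (ne_of_gt hμpos)
  -- realizable trig polynomial and its derivative
  set rest : ℝ → ℝ := fun x => trigTerm (A0/(2*Complex.I*μ)) μ x +
    ∑ j : Fin m, trigTerm (a (en j)/(2*Complex.I*(en j))) ((en j : ℝ)) x with hrestdef
  set κ : ℝ := fstar α - rest α with hκdef
  set p : ℝ → ℝ := fun x => κ + rest x with hpdef
  set pd : ℝ → ℝ := fun x => trigTerm ((A0/(2*Complex.I*μ)) * (↑μ*Complex.I)) μ x +
    ∑ j : Fin m, trigTerm ((a (en j)/(2*Complex.I*(en j))) * (((en j : ℝ) : ℂ)*Complex.I))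
      ((en j : ℝ)) x with hpddef
  have hpdiff : ∀ x, HasDerivAt p (pd x) x := by
    intro x
    refine HasDerivAt.const_add κ ?_
    exact (trigTerm_hasDerivAt _ _ x).add
      (HasDerivAt.fun_sum fun j _ => trigTerm_hasDerivAt _ _ x)
  have hpc : Continuous p :=
    continuous_const.add ((trigTerm_continuous _ _).add
      (continuous_finset_sum _ fun j _ => trigTerm_continuous _ _))
  have hpdc : Continuous pd :=
    (trigTerm_continuous _ _).add (continuous_finset_sum _ fun j _ => trigTerm_continuous _ _)
  -- simplification of pd
  have hpd_eq : ∀ x : ℝ, pd x = (A0 * Complex.exp (↑μ*↑x*Complex.I)).re +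
      ∑ n ∈ sf', (a n * Complex.exp ((n:ℂ)*↑x*Complex.I)).re := by
    intro x
    rw [hpddef]
    have h1 : (A0/(2*Complex.I*μ)) * (↑μ*Complex.I) = A0/2 := by
      field_simp
    have h2 : ∀ j, (a (en j)/(2*Complex.I*(en j))) * (((en j : ℝ) : ℂ)*Complex.I)
        = a (en j)/2 := by
      intro j
      rw [Complex.ofReal_intCast]
      have hn := hen_neC j
      field_simp
    simp only [h1, h2, trigTerm_half]
    congr 1
    rw [← hensum fun n => (a n * Complex.exp ((n:ℂ)*↑x*Complex.I)).re]
    refine Finset.sum_congr rfl fun j _ => ?_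
    rw [Complex.ofReal_intCast]
  -- bound on pd - g
  have hpd_bound : ∀ x ∈ Set.Icc α β, |pd x - g x| ≤ 2*δ := by
    intro x hx
    obtain ⟨hx1, hx2⟩ := hx
    have hxpos : 0 < x := lt_of_lt_of_le hα hx1
    have hQ := ha x ⟨hx1, hx2⟩
    rw [hsplit x] at hQ
    have hexp1 : ‖Complex.exp (↑μ*↑x*Complex.I) - 1‖ ≤ 2*(μ*x) := by
      have habs : ‖↑μ*↑x*Complex.I‖ = μ * x := by
        simp only [norm_mul, Complex.norm_real, Complex.norm_I, mul_one, Real.norm_eq_abs]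
        rw [abs_of_pos hμpos, abs_of_pos hxpos]
      have hle1 : ‖↑μ*↑x*Complex.I‖ ≤ 1 := by
        rw [habs]
        have hμ1 : μ ≤ (β+1)⁻¹ := min_le_left _ _
        have h3 : μ * x ≤ (β+1)⁻¹ * β :=
          mul_le_mul hμ1 hx2 (le_of_lt hxpos) (by positivity)
        have hb : (β+1)⁻¹ * β ≤ 1 := by
          rw [inv_mul_le_iff₀ hβ1]
          linarith
        linarith
      have h4 := Complex.norm_exp_sub_one_le hle1
      rwa [habs] at h4
    have hdecomp : pd x - g x = ((A0 * (Complex.exp (↑μ*↑x*Complex.I) - 1)) +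
        ((A0 + ∑ n ∈ sf', a n * Complex.exp ((n:ℂ)*↑x*Complex.I)) - ((g x : ℝ):ℂ))).re := by
      have hrw : (A0 * (Complex.exp (↑μ*↑x*Complex.I) - 1)) +
          ((A0 + ∑ n ∈ sf', a n * Complex.exp ((n:ℂ)*↑x*Complex.I)) - ((g x : ℝ):ℂ))
          = A0 * Complex.exp (↑μ*↑x*Complex.I)
            + (∑ n ∈ sf', a n * Complex.exp ((n:ℂ)*↑x*Complex.I)) - ((g x : ℝ):ℂ) := by
        ring
      rw [hrw, Complex.sub_re, Complex.add_re, Complex.re_sum, Complex.ofReal_re, hpd_eq x]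
    have hstep : |pd x - g x| ≤ ‖A0 * (Complex.exp (↑μ*↑x*Complex.I) - 1)‖ +
        ‖(A0 + ∑ n ∈ sf', a n * Complex.exp ((n:ℂ)*↑x*Complex.I)) - ((g x : ℝ):ℂ)‖ := by
      rw [hdecomp]
      exact (Complex.abs_re_le_norm _).trans (norm_add_le _ _)
    have hterm1 : ‖A0 * (Complex.exp (↑μ*↑x*Complex.I) - 1)‖ ≤ A * (2*(μ*x)) := by
      rw [norm_mul]
      exact mul_le_mul_of_nonneg_left hexp1 hA0nn
    have hμ2 : μ * (2*(β+1)*(A+1)) ≤ δ := by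
      have := min_le_right ((β+1)⁻¹) (δ / (2*(β+1)*(A+1)))
      calc μ * (2*(β+1)*(A+1)) ≤ (δ / (2*(β+1)*(A+1))) * (2*(β+1)*(A+1)) :=
        mul_le_mul_of_nonneg_right this (le_of_lt h2A)
      _ = δ := div_mul_cancel₀ _ (ne_of_gt h2A)
    have hterm1' : A * (2*(μ*x)) ≤ δ := by
      have hxb : x ≤ β := hx2
      have h5 : A * x ≤ (A+1)*(β+1) := by nlinarith
      calc A*(2*(μ*x)) = 2*μ*(A*x) := by ring
      _ ≤ 2*μ*((A+1)*(β+1)) := mul_le_mul_of_nonneg_left h5 (by positivity)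
      _ = μ*(2*(β+1)*(A+1)) := by ring
      _ ≤ δ := hμ2
    calc |pd x - g x| ≤ A * (2*(μ*x)) +
        ‖(A0 + ∑ n ∈ sf', a n * Complex.exp ((n:ℂ)*↑x*Complex.I)) - ((g x : ℝ):ℂ)‖ :=
        le_trans hstep (add_le_add_left hterm1 _)
    _ ≤ δ + δ := add_le_add hterm1' hQ
    _ = 2*δ := by ring
  -- bound on p - fstar
  have hp_bound : ∀ x ∈ Set.Icc α β, |p x - fstar x| ≤ (2*δ)*(β-α) := by
    intro x hx
    have hmemα : α ∈ Set.Icc α β := Set.left_mem_Icc.2 (le_of_lt hαβ)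
    have hmv := (convex_Icc α β).norm_image_sub_le_of_norm_hasDerivWithin_le
      (f := fun y => p y - fstar y) (f' := fun y => pd y - g y) (C := 2*δ)
      (fun y _ => ((hpdiff y).sub (hfd y)).hasDerivWithinAt)
      (fun y hy => by rw [Real.norm_eq_abs]; exact hpd_bound y hy)
      hmemα hx
    have hpα : p α - fstar α = 0 := by
      simp only [hpdef, hκdef]; ring
    simp only [hpα, sub_zero, Real.norm_eq_abs] at hmv
    have hxd : |x - α| ≤ β - α := by
      rw [abs_of_nonneg (by linarith [hx.1])]
      linarith [hx.2]
    calc |p x - fstar x| ≤ 2*δ*|x-α| := hmv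
    _ ≤ (2*δ)*(β-α) := mul_le_mul_of_nonneg_left hxd (by positivity)
  -- realization as a quantum model
  set V : Fin (m+1+1) → ℝ := Fin.cons 0 (Fin.cons μ (fun j => ((en j : ℤ) : ℝ))) with hV
  set C : Fin (m+1+1) → ℂ := Fin.cons ((κ:ℂ)/2)
    (Fin.cons (A0/(2*Complex.I*μ)) (fun j => a (en j)/(2*Complex.I*(en j)))) with hC
  obtain ⟨H, M, Γ, hH, hM, hΓ, hmodel⟩ := realize (m+1+1) C V
  have hsum_p : ∀ x : ℝ, (∑ k, trigTerm (C k) (V k) x) = p x := by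
    intro x
    rw [hC, hV]
    simp only [Fin.sum_univ_succ, Fin.cons_zero, Fin.cons_succ]
    have hconst : trigTerm ((κ:ℂ)/2) (0:ℝ) x = κ := by
      rw [trigTerm_half]
      simp
    rw [hconst]
  have hmodel_p : ∀ x, quantumModel H M Γ x = ((p x : ℝ) : ℂ) := fun x => by
    rw [hmodel x, hsum_p x]
  have hre : ∀ x, (quantumModel H M Γ x).re = p x := fun x => by
    rw [hmodel_p x, Complex.ofReal_re]
  have him : ∀ x, (quantumModel H M Γ x).im = 0 := fun x => by
    rw [hmodel_p x, Complex.ofReal_im]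
  refine ⟨m+1+1+1, H, M, Γ, hH, hM, hΓ, him, ?_⟩
  have hfun : (fun y => (quantumModel H M Γ y).re) = p := funext hre
  have hderiv_eq : ∀ x, deriv (fun y => (quantumModel H M Γ y).re) x = pd x := by
    intro x
    rw [hfun]
    exact (hpdiff x).deriv
  have hderiv_eq' : ∀ x, deriv p x = pd x := fun x => (hpdiff x).deriv
  simp only [hre, hderiv_eq, hderiv_eq']
  -- integral estimates
  have hI1 : (∫ x in α..β, (p x - fstar x)^2) ≤ (β-α) * ((2*δ)*(β-α))^2 := by
    have hint : IntervalIntegrable (fun x => (p x - fstar x)^2) MeasureTheory.volume α β :=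
      ((hpc.sub hfstar.continuous).pow 2).intervalIntegrable α β
    have h := intervalIntegral.integral_mono_on (μ := MeasureTheory.volume) (le_of_lt hαβ) hint
      (intervalIntegrable_const) (f := fun x => (p x - fstar x)^2)
      (g := fun _ => ((2*δ)*(β-α))^2)
      (fun x hx => by
        show (p x - fstar x)^2 ≤ ((2*δ)*(β-α))^2
        calc (p x - fstar x)^2 = |p x - fstar x|^2 := (sq_abs _).symm
        _ ≤ ((2*δ)*(β-α))^2 := pow_le_pow_left₀ (abs_nonneg _) (hp_bound x hx) 2)
    simpa [intervalIntegral.integral_const, smul_eq_mul] using h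
  have hI2 : (∫ x in α..β, (pd x - g x)^2) ≤ (β-α) * (2*δ)^2 := by
    have hint : IntervalIntegrable (fun x => (pd x - g x)^2) MeasureTheory.volume α β :=
      ((hpdc.sub hgc).pow 2).intervalIntegrable α β
    have h := intervalIntegral.integral_mono_on (μ := MeasureTheory.volume) (le_of_lt hαβ) hint
      (intervalIntegrable_const) (f := fun x => (pd x - g x)^2)
      (g := fun _ => (2*δ)^2)
      (fun x hx => by
        show (pd x - g x)^2 ≤ (2*δ)^2
        calc (pd x - g x)^2 = |pd x - g x|^2 := (sq_abs _).symm
        _ ≤ (2*δ)^2 := pow_le_pow_left₀ (abs_nonneg _) (hpd_bound x hx) 2)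
    simpa [intervalIntegral.integral_const, smul_eq_mul] using h
  have hval : (β-α) * ((2*δ)*(β-α))^2 + (β-α) * (2*δ)^2 = ε/2 := by
    have h1 : (β-α) * ((2*δ)*(β-α))^2 + (β-α) * (2*δ)^2 = (T/2) * δ^2 := by
      rw [hTdef]; ring
    rw [h1, hδsq]
    field_simp
  linarith [hI1, hI2]
end

section
/- (Pricing identity via CDF Fourier coefficients, Method II.) Let a < c < b, set â = (3a−b)/2 and b̂ = (3b−a)/2, and let K ∈ ℕ. Let h : ℝ → ℝ be continuous on [a,b] and continuously differentiable on [a,c] and on [c,b], let f : ℝ → ℝ be continuous on [a,b], and let F : ℝ → ℝ be differentiable on [a,b] with F' = f on [a,b]. Suppose that on [a,b], F is given exactly by F(y) = A_0/2 + Σ_{k=1}^{K} (A_k cos(2πk(y−â)/(b̂−â)) + B_k sin(2πk(y−â)/(b̂−â))) for real coefficients A_k, B_k. Define C_k^a = ∫_a^c h'(y) cos(2πk(y−â)/(b̂−â)) dy, D_k^a = ∫_a^c h'(y) sin(2πk(y−â)/(b̂−â)) dy, C_k^b = ∫_c^b h'(y) cos(2πk(y−â)/(b̂−â)) dy, D_k^b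 = ∫_c^b h'(y) sin(2πk(y−â)/(b̂−â)) dy. Then ∫_a^b h(y) f(y) dy = h(b)F(b) − h(a)F(a) − ( A_0·C_0^a/2 + Σ_{k=1}^{K} (A_k·C_k^a + B_k·D_k^a) ) − ( A_0·C_0^b/2 + Σ_{k=1}^{K} (A_k·C_k^b + B_k·D_k^b) ). -/
open Real intervalIntegral

set_option maxHeartbeats 1000000 in
lemma aux_series_integral (p q : ℝ) (hpq : p ≤ q) (ahat bhat : ℝ) (K : ℕ)
    (g : ℝ → ℝ) (hg : ContinuousOn g (Set.Icc p q)) (A B : ℕ → ℝ) :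
    ∫ y in p..q, g y * (A 0 / 2 + ∑ k ∈ Finset.Icc 1 K,
      (A k * Real.cos (2 * π * k * (y - ahat) / (bhat - ahat)) +
        B k * Real.sin (2 * π * k * (y - ahat) / (bhat - ahat)))) =
    A 0 * (∫ y in p..q, g y * Real.cos (2 * π * (0:ℕ) * (y - ahat) / (bhat - ahat))) / 2 +
      ∑ k ∈ Finset.Icc 1 K,
        (A k * ∫ y in p..q, g y * Real.cos (2 * π * k * (y - ahat) / (bhat - ahat))) +
      ∑ k ∈ Finset.Icc 1 K,
        (B k * ∫ y in p..q, g y * Real.sin (2 * π * k * (y - ahat) / (bhat - ahat))) := by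
  have huIcc : Set.uIcc p q = Set.Icc p q := Set.uIcc_of_le hpq
  have hcos : ∀ k : ℕ, IntervalIntegrable
      (fun y => g y * Real.cos (2 * π * k * (y - ahat) / (bhat - ahat)))
      MeasureTheory.volume p q := by
    intro k
    apply ContinuousOn.intervalIntegrable
    rw [huIcc]
    exact hg.mul (Continuous.continuousOn (by fun_prop))
  have hsin : ∀ k : ℕ, IntervalIntegrable
      (fun y => g y * Real.sin (2 * π * k * (y - ahat) / (bhat - ahat)))
      MeasureTheory.volume p q := by
    intro k
    apply ContinuousOn.intervalIntegrable
    rw [huIcc]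
    exact hg.mul (Continuous.continuousOn (by fun_prop))
  have hgi : IntervalIntegrable (fun y => g y * (A 0 / 2)) MeasureTheory.volume p q := by
    apply ContinuousOn.intervalIntegrable
    rw [huIcc]
    exact hg.mul continuousOn_const
  have key : ∀ y, g y * (A 0 / 2 + ∑ k ∈ Finset.Icc 1 K,
      (A k * Real.cos (2 * π * k * (y - ahat) / (bhat - ahat)) +
        B k * Real.sin (2 * π * k * (y - ahat) / (bhat - ahat)))) =
      g y * (A 0 / 2) + ∑ k ∈ Finset.Icc 1 K,
      (A k * (g y * Real.cos (2 * π * k * (y - ahat) / (bhat - ahat))) +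
       B k * (g y * Real.sin (2 * π * k * (y - ahat) / (bhat - ahat)))) := by
    intro y
    rw [mul_add, Finset.mul_sum]
    congr 1
    exact Finset.sum_congr rfl fun k _ => by ring
  have hterm : ∀ k ∈ Finset.Icc 1 K, IntervalIntegrable
      (fun y => A k * (g y * Real.cos (2 * π * k * (y - ahat) / (bhat - ahat))) +
        B k * (g y * Real.sin (2 * π * k * (y - ahat) / (bhat - ahat))))
      MeasureTheory.volume p q :=
    fun k _ => ((hcos k).const_mul (A k)).add ((hsin k).const_mul (B k))
  have hsum : IntervalIntegrable (fun y => ∑ k ∈ Finset.Icc 1 K,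
      (A k * (g y * Real.cos (2 * π * k * (y - ahat) / (bhat - ahat))) +
        B k * (g y * Real.sin (2 * π * k * (y - ahat) / (bhat - ahat)))))
      MeasureTheory.volume p q := by
    have := IntervalIntegrable.sum (Finset.Icc 1 K) hterm
    simpa only [Finset.sum_fn] using this
  simp_rw [key]
  rw [intervalIntegral.integral_add hgi hsum,
    intervalIntegral.integral_finset_sum hterm]
  have e0 : (∫ y in p..q, g y * (A 0 / 2)) =
      A 0 * (∫ y in p..q, g y * Real.cos (2 * π * (0:ℕ) * (y - ahat) / (bhat - ahat))) / 2 := by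
    simp only [Nat.cast_zero, mul_zero, zero_mul, zero_div, Real.cos_zero, mul_one]
    rw [intervalIntegral.integral_mul_const]
    ring
  have ek : ∀ k ∈ Finset.Icc 1 K, (∫ y in p..q,
      (A k * (g y * Real.cos (2 * π * k * (y - ahat) / (bhat - ahat))) +
       B k * (g y * Real.sin (2 * π * k * (y - ahat) / (bhat - ahat))))) =
      (A k * ∫ y in p..q, g y * Real.cos (2 * π * k * (y - ahat) / (bhat - ahat))) +
      (B k * ∫ y in p..q, g y * Real.sin (2 * π * k * (y - ahat) / (bhat - ahat))) := by
    intro k _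
    rw [intervalIntegral.integral_add ((hcos k).const_mul _) ((hsin k).const_mul _),
      intervalIntegral.integral_const_mul, intervalIntegral.integral_const_mul]
  rw [e0, Finset.sum_congr rfl ek, Finset.sum_add_distrib]
  ring

/-- Pricing identity via CDF Fourier coefficients (Method II): if the CDF `F` agrees on
`[a,b]` with a truncated trigonometric Fourier series on the extended interval
`[â, b̂] = [(3a−b)/2, (3b−a)/2]`, then the integral `∫_a^b h f` can be expressed through
the Fourier coefficients of `F` and the payoff-derivative integrals `C_k^a, D_k^a, C_k^b, D_k^b`. -/
theorem pricing_identity_cdf_fourier (a c b : ℝ) (hac : a < c) (hcb : c < b)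
    (ahat bhat : ℝ) (hahat : ahat = (3 * a - b) / 2) (hbhat : bhat = (3 * b - a) / 2)
    (K : ℕ) (h f F : ℝ → ℝ) (g₁ g₂ : ℝ → ℝ)
    (hhcont : ContinuousOn h (Set.Icc a b))
    (hh1 : ∀ y ∈ Set.Icc a c, HasDerivWithinAt h (g₁ y) (Set.Icc a c) y)
    (hg₁ : ContinuousOn g₁ (Set.Icc a c))
    (hh2 : ∀ y ∈ Set.Icc c b, HasDerivWithinAt h (g₂ y) (Set.Icc c b) y)
    (hg₂ : ContinuousOn g₂ (Set.Icc c b))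
    (hfcont : ContinuousOn f (Set.Icc a b))
    (hF : ∀ y ∈ Set.Icc a b, HasDerivWithinAt F (f y) (Set.Icc a b) y)
    (A B : ℕ → ℝ)
    (hFser : ∀ y ∈ Set.Icc a b, F y = A 0 / 2 + ∑ k ∈ Finset.Icc 1 K,
      (A k * Real.cos (2 * π * k * (y - ahat) / (bhat - ahat)) +
        B k * Real.sin (2 * π * k * (y - ahat) / (bhat - ahat))))
    (Ca Da Cb Db : ℕ → ℝ)
    (hCa : ∀ k : ℕ, Ca k = ∫ y in a..c, g₁ y * Real.cos (2 * π * k * (y - ahat) / (bhat - ahat)))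
    (hDa : ∀ k : ℕ, Da k = ∫ y in a..c, g₁ y * Real.sin (2 * π * k * (y - ahat) / (bhat - ahat)))
    (hCb : ∀ k : ℕ, Cb k = ∫ y in c..b, g₂ y * Real.cos (2 * π * k * (y - ahat) / (bhat - ahat)))
    (hDb : ∀ k : ℕ, Db k = ∫ y in c..b, g₂ y * Real.sin (2 * π * k * (y - ahat) / (bhat - ahat))) :
    ∫ y in a..b, h y * f y =
      h b * F b - h a * F a -
        (A 0 * Ca 0 / 2 + ∑ k ∈ Finset.Icc 1 K, (A k * Ca k + B k * Da k)) -
        (A 0 * Cb 0 / 2 + ∑ k ∈ Finset.Icc 1 K, (A k * Cb k + B k * Db k)) := by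
  have hab : a ≤ b := (hac.trans hcb).le
  have hIac : Set.Icc a c ⊆ Set.Icc a b := Set.Icc_subset_Icc le_rfl hcb.le
  have hIcb : Set.Icc c b ⊆ Set.Icc a b := Set.Icc_subset_Icc hac.le le_rfl
  have huac : Set.uIcc a c = Set.Icc a c := Set.uIcc_of_le hac.le
  have hucb : Set.uIcc c b = Set.Icc c b := Set.uIcc_of_le hcb.le
  have hfi1 : IntervalIntegrable f MeasureTheory.volume a c := by
    apply ContinuousOn.intervalIntegrable; rw [huac]; exact hfcont.mono hIac
  have hfi2 : IntervalIntegrable f MeasureTheory.volume c b := by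
    apply ContinuousOn.intervalIntegrable; rw [hucb]; exact hfcont.mono hIcb
  have hg₁i : IntervalIntegrable g₁ MeasureTheory.volume a c := by
    apply ContinuousOn.intervalIntegrable; rw [huac]; exact hg₁
  have hg₂i : IntervalIntegrable g₂ MeasureTheory.volume c b := by
    apply ContinuousOn.intervalIntegrable; rw [hucb]; exact hg₂
  have ibp1 : ∫ y in a..c, h y * f y =
      h c * F c - h a * F a - ∫ y in a..c, g₁ y * F y := by
    apply intervalIntegral.integral_mul_deriv_eq_deriv_mul_of_hasDerivWithinAt
      (u' := g₁) (v' := f)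
    · intro x hx; rw [huac] at hx ⊢; exact hh1 x hx
    · intro x hx; rw [huac] at hx ⊢; exact (hF x (hIac hx)).mono hIac
    · exact hg₁i
    · exact hfi1
  have ibp2 : ∫ y in c..b, h y * f y =
      h b * F b - h c * F c - ∫ y in c..b, g₂ y * F y := by
    apply intervalIntegral.integral_mul_deriv_eq_deriv_mul_of_hasDerivWithinAt
      (u' := g₂) (v' := f)
    · intro x hx; rw [hucb] at hx ⊢; exact hh2 x hx
    · intro x hx; rw [hucb] at hx ⊢; exact (hF x (hIcb hx)).mono hIcb
    · exact hg₂i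
    · exact hfi2
  have hhf1 : IntervalIntegrable (fun y => h y * f y) MeasureTheory.volume a c := by
    apply ContinuousOn.intervalIntegrable
    rw [huac]
    exact (hhcont.mono hIac).mul (hfcont.mono hIac)
  have hhf2 : IntervalIntegrable (fun y => h y * f y) MeasureTheory.volume c b := by
    apply ContinuousOn.intervalIntegrable
    rw [hucb]
    exact (hhcont.mono hIcb).mul (hfcont.mono hIcb)
  have hsplit : ∫ y in a..b, h y * f y =
      (∫ y in a..c, h y * f y) + ∫ y in c..b, h y * f y :=
    (intervalIntegral.integral_add_adjacent_intervals hhf1 hhf2).symm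
  have hser1 : (∫ y in a..c, g₁ y * F y) =
      ∫ y in a..c, g₁ y * (A 0 / 2 + ∑ k ∈ Finset.Icc 1 K,
        (A k * Real.cos (2 * π * k * (y - ahat) / (bhat - ahat)) +
          B k * Real.sin (2 * π * k * (y - ahat) / (bhat - ahat)))) := by
    apply intervalIntegral.integral_congr
    intro y hy
    rw [huac] at hy
    show g₁ y * F y = g₁ y * (A 0 / 2 + ∑ k ∈ Finset.Icc 1 K,
      (A k * Real.cos (2 * π * k * (y - ahat) / (bhat - ahat)) +
        B k * Real.sin (2 * π * k * (y - ahat) / (bhat - ahat))))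
    rw [hFser y (hIac hy)]
  have hser2 : (∫ y in c..b, g₂ y * F y) =
      ∫ y in c..b, g₂ y * (A 0 / 2 + ∑ k ∈ Finset.Icc 1 K,
        (A k * Real.cos (2 * π * k * (y - ahat) / (bhat - ahat)) +
          B k * Real.sin (2 * π * k * (y - ahat) / (bhat - ahat)))) := by
    apply intervalIntegral.integral_congr
    intro y hy
    rw [hucb] at hy
    show g₂ y * F y = g₂ y * (A 0 / 2 + ∑ k ∈ Finset.Icc 1 K,
      (A k * Real.cos (2 * π * k * (y - ahat) / (bhat - ahat)) +
        B k * Real.sin (2 * π * k * (y - ahat) / (bhat - ahat))))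
    rw [hFser y (hIcb hy)]
  have e1 := aux_series_integral a c hac.le ahat bhat K g₁ hg₁ A B
  have e2 := aux_series_integral c b hcb.le ahat bhat K g₂ hg₂ A B
  rw [hsplit, ibp1, ibp2, hser1, hser2, e1, e2]
  simp_rw [hCa, hDa, hCb, hDb]
  rw [Finset.sum_add_distrib, Finset.sum_add_distrib]
  ring
end
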